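/- arXiv:0901.0745 — 6 statements merged into one kernel-verified Lean document; each statement's English description precedes it below -/
import Mathlib

section
/- Let 𝕜 be a field, R a commutative 𝕜-algebra, δ a 𝕜-derivation of R, and v : Fin N → R a family of elements. Let f ∈ R satisfy f ∣ δ(f). If there exist scalars c : Fin N → 𝕜 with c(j₀) ≠ 0 for some index j₀ such that f divides Σ_j c(j) • v(j), then f divides the determinant of the N×N matrix whose (i, j) entry is δ^[i](v(j)) (rows indexed by i = 0, …, N−1). -/
lemma iterate_deriv_sum_smul {𝕜 : Type*} [Field 𝕜] {R : Type*} [CommRing R]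
    [Algebra 𝕜 R] (δ : Derivation 𝕜 R R) {N : ℕ} (v : Fin N → R) (c : Fin N → 𝕜) :
    ∀ i : ℕ, (⇑δ)^[i] (∑ j, c j • v j) = ∑ j, c j • (⇑δ)^[i] (v j) := by
  intro i
  induction i with
  | zero => simp
  | succ i ih =>
    simp only [Function.iterate_succ_apply', ih]
    rw [show (⇑δ) = ⇑(δ : R →ₗ[𝕜] R) from rfl, map_sum]
    simp

lemma det_updateColumn_finset_sum {R : Type*} [CommRing R] {n : Type*} [DecidableEq n]
    [Fintype n] (A : Matrix n n R) (j : n) {ι : Type*} (s : Finset ι) (u : ι → n → R) :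
    (A.updateCol j (∑ i ∈ s, u i)).det = ∑ i ∈ s, (A.updateCol j (u i)).det := by
  classical
  induction s using Finset.induction_on with
  | empty =>
    simp only [Finset.sum_empty]
    have : (0 : n → R) = (0 : R) • (0 : n → R) := by simp
    rw [this, Matrix.det_updateCol_smul, zero_mul]
  | insert _ _ hx ih =>
    rw [Finset.sum_insert hx, Matrix.det_updateCol_add, ih, Finset.sum_insert hx]

lemma dvd_iterate_deriv {𝕜 : Type*} [Field 𝕜] {R : Type*} [CommRing R]
    [Algebra 𝕜 R] (δ : Derivation 𝕜 R R) (f w : R) (hf : f ∣ δ f) (hw : f ∣ w) :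
    ∀ i : ℕ, f ∣ (⇑δ)^[i] w := by
  intro i
  induction i with
  | zero => simpa using hw
  | succ i ih =>
    rw [Function.iterate_succ_apply']
    obtain ⟨g, hg⟩ := ih
    rw [hg, Derivation.leibniz, smul_eq_mul, smul_eq_mul]
    exact dvd_add (dvd_mul_right f _) (dvd_mul_of_dvd_right hf g)

/-- Pereira's Proposition 5, algebraic form: a `δ`-invariant element `f` that divides
some nonzero element of the `𝕜`-span of `v 0, …, v (N-1)` divides the extactic
(Wronskian-type) determinant `det (δ^[i] (v j))`. -/
theorem invariant_divides_extactic_det {𝕜 : Type*} [Field 𝕜] {R : Type*} [CommRing R]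
    [Algebra 𝕜 R] (δ : Derivation 𝕜 R R) {N : ℕ} (v : Fin N → R) (f : R)
    (hf : f ∣ δ f) (c : Fin N → 𝕜) (j₀ : Fin N) (hc : c j₀ ≠ 0)
    (hdvd : f ∣ ∑ j, c j • v j) :
    f ∣ Matrix.det (Matrix.of fun i j : Fin N => (⇑δ)^[(i : ℕ)] (v j)) := by
  set M : Matrix (Fin N) (Fin N) R := Matrix.of fun i j : Fin N => (⇑δ)^[(i : ℕ)] (v j) with hM
  set w : Fin N → R := fun i => (⇑δ)^[(i : ℕ)] (∑ j, c j • v j) with hw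
  -- f divides each entry of w
  have hfw : ∀ i, f ∣ w i := fun i => dvd_iterate_deriv δ f _ hf hdvd i
  -- f divides det of M with column j₀ replaced by w
  choose g hg using hfw
  have hwfg : w = f • g := by
    funext i; simpa using hg i
  have h1 : f ∣ (M.updateCol j₀ w).det := by
    rw [hwfg, Matrix.det_updateCol_smul]
    exact Dvd.dvd.mul_right (dvd_refl f) _
  -- compute that determinant
  have h2 : (M.updateCol j₀ w).det = algebraMap 𝕜 R (c j₀) * M.det := by
    have hwsum : w = ∑ j, algebraMap 𝕜 R (c j) • fun i : Fin N => (⇑δ)^[(i : ℕ)] (v j) := by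
      funext i
      simp only [hw, iterate_deriv_sum_smul δ v c i, Finset.sum_apply, Pi.smul_apply,
        algebraMap_smul]
    rw [hwsum, det_updateColumn_finset_sum]
    simp only [Matrix.det_updateCol_smul]
    rw [Finset.sum_eq_single j₀]
    · exact congrArg (fun d => algebraMap 𝕜 R (c j₀) * d) (congrArg Matrix.det (Matrix.updateCol_eq_self M j₀))
    · intro j _ hj
      have : (M.updateCol j₀ fun i : Fin N => (⇑δ)^[(i : ℕ)] (v j)).det = 0 := by
        apply Matrix.det_zero_of_column_eq hj
        intro i
        simp [Matrix.updateCol_apply, hj, Ne.symm hj, hM]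
      rw [this, mul_zero]
    · intro h
      exact absurd (Finset.mem_univ j₀) h
  rw [h2] at h1
  have hu : IsUnit (algebraMap 𝕜 R (c j₀)) :=
    (isUnit_iff_ne_zero.mpr hc).map (algebraMap 𝕜 R)
  exact (IsUnit.dvd_mul_left hu).mp h1
end

section
/- Let K be a field of characteristic zero and δ a derivation of K (formally, δ : Derivation ℚ K K). For any family v : Fin N → K, the Wronskian determinant det(δ^[i](v(j)))_{0 ≤ i ≤ N−1, 1 ≤ j ≤ N} vanishes if and only if the family v is linearly dependent over the field of constants of δ, i.e., if and only if there exist c : Fin N → K with δ(c(j)) = 0 for all j, c not identically zero, and Σ_j c(j)·v(j) = 0. -/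
section Aux

variable {K : Type*} [Field K] [CharZero K]

lemma iter_const_mul (δ : Derivation ℚ K K) {c : K} (hc : δ c = 0) (x : K) (n : ℕ) :
    (⇑δ)^[n] (c * x) = c * (⇑δ)^[n] x := by
  induction n generalizing x with
  | zero => rfl
  | succ n ih =>
    rw [Function.iterate_succ_apply, Function.iterate_succ_apply]
    rw [show δ (c * x) = c * δ x by
      rw [Derivation.leibniz, smul_eq_mul, smul_eq_mul, hc, mul_zero, add_zero]]
    exact ih (δ x)

lemma iter_sum (δ : Derivation ℚ K K) {ι : Type*} [Fintype ι] (f : ι → K) (n : ℕ) :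
    (⇑δ)^[n] (∑ j, f j) = ∑ j, (⇑δ)^[n] (f j) := by
  induction n generalizing f with
  | zero => rfl
  | succ n ih =>
    rw [Function.iterate_succ_apply, map_sum]
    exact ih _

lemma wronskian_hard (δ : Derivation ℚ K K) :
    ∀ (N : ℕ) (v : Fin N → K),
      Matrix.det (Matrix.of fun i j : Fin N => (⇑δ)^[(i : ℕ)] (v j)) = 0 →
      ∃ c : Fin N → K, (∀ j, δ (c j) = 0) ∧ c ≠ 0 ∧ ∑ j, c j * v j = 0 := by
  intro N
  induction N with
  | zero =>
    intro v h
    simp [Matrix.det_fin_zero] at h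
  | succ N ih =>
    intro v h
    set M : Matrix (Fin N) (Fin N) K :=
      Matrix.of fun i j : Fin N => (⇑δ)^[(i : ℕ)] (v j.castSucc) with hMdef
    by_cases hM : M.det = 0
    · obtain ⟨c', hc'const, hc'ne, hc'sum⟩ := ih (fun j => v j.castSucc) hM
      refine ⟨Fin.snoc c' 0, ?_, ?_, ?_⟩
      · intro j
        refine Fin.lastCases ?_ ?_ j
        · simp
        · intro i; simp [Fin.snoc_castSucc, hc'const i]
      · obtain ⟨j, hj⟩ := Function.ne_iff.mp hc'ne
        exact Function.ne_iff.mpr ⟨j.castSucc, by simpa using hj⟩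
      · rw [Fin.sum_univ_castSucc]
        simp [Fin.snoc_castSucc, hc'sum]
    · -- M invertible; get kernel vector of full matrix
      obtain ⟨a, ha, hmul⟩ := Matrix.exists_mulVec_eq_zero_iff.mpr h
      have hrel : ∀ i : Fin (N + 1), ∑ j, (⇑δ)^[(i : ℕ)] (v j) * a j = 0 := by
        intro i
        have := congrFun hmul i
        simpa [Matrix.mulVec, dotProduct] using this
      have halast : a (Fin.last N) ≠ 0 := by
        intro h0
        have hb : M.mulVec (fun j => a j.castSucc) = 0 := by
          funext i
          have := hrel i.castSucc
          rw [Fin.sum_univ_castSucc, h0, mul_zero, add_zero] at this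
          simpa [Matrix.mulVec, dotProduct, hMdef] using this
        have hbz : (fun j : Fin N => a j.castSucc) = 0 := by
          by_contra hne
          exact hM (Matrix.exists_mulVec_eq_zero_iff.mp ⟨_, hne, hb⟩)
        apply ha
        funext j
        refine Fin.lastCases h0 (fun i => ?_) j
        exact congrFun hbz i
      set c : Fin (N + 1) → K := fun j => (a (Fin.last N))⁻¹ * a j with hcdef
      have hclast : c (Fin.last N) = 1 := inv_mul_cancel₀ halast
      have hcrel : ∀ i : ℕ, i ≤ N → ∑ j, (⇑δ)^[i] (v j) * c j = 0 := by
        intro i hi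
        have := hrel ⟨i, Nat.lt_succ_of_le hi⟩
        calc ∑ j, (⇑δ)^[i] (v j) * c j
            = (a (Fin.last N))⁻¹ * ∑ j, (⇑δ)^[i] (v j) * a j := by
              rw [Finset.mul_sum]; apply Finset.sum_congr rfl; intro j _; ring
          _ = 0 := by rw [this, mul_zero]
      -- differentiate relations
      have hdrel : ∀ i : ℕ, i < N → ∑ j, (⇑δ)^[i] (v j) * δ (c j) = 0 := by
        intro i hi
        have h1 : δ (∑ j, (⇑δ)^[i] (v j) * c j) = 0 := by
          rw [hcrel i (le_of_lt hi)]; exact map_zero _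
        rw [map_sum] at h1
        have h2 : ∀ j : Fin (N + 1),
            δ ((⇑δ)^[i] (v j) * c j)
              = (⇑δ)^[i] (v j) * δ (c j) + (⇑δ)^[i + 1] (v j) * c j := by
          intro j
          rw [Derivation.leibniz, smul_eq_mul, smul_eq_mul,
            ← Function.iterate_succ_apply' (⇑δ) i (v j)]
          ring
        rw [Finset.sum_congr rfl (fun j _ => h2 j), Finset.sum_add_distrib,
          hcrel (i + 1) hi, add_zero] at h1
        exact h1
      have hdconst : ∀ j, δ (c j) = 0 := by
        have hb : M.mulVec (fun j => δ (c j.castSucc)) = 0 := by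
          funext i
          have := hdrel i i.isLt
          rw [Fin.sum_univ_castSucc, hclast] at this
          rw [Derivation.map_one_eq_zero, mul_zero, add_zero] at this
          simpa [Matrix.mulVec, dotProduct, hMdef] using this
        have hbz : (fun j : Fin N => δ (c j.castSucc)) = 0 := by
          by_contra hne
          exact hM (Matrix.exists_mulVec_eq_zero_iff.mp ⟨_, hne, hb⟩)
        intro j
        refine Fin.lastCases ?_ (fun i => congrFun hbz i) j
        rw [hclast]; exact Derivation.map_one_eq_zero δ
      refine ⟨c, hdconst, ?_, ?_⟩
      · intro h0
        have := congrFun h0 (Fin.last N)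
        rw [hclast] at this
        exact one_ne_zero this
      · have := hcrel 0 (Nat.zero_le N)
        simpa [mul_comm] using this

end Aux

/-- Wronskian criterion over a differential field of characteristic zero: the Wronskian
determinant `det (δ^[i] (v j))` vanishes iff the family `v` is linearly dependent over the
constants of `δ`. -/
theorem wronskian_eq_zero_iff_linearDependent_over_constants
    {K : Type*} [Field K] [CharZero K] (δ : Derivation ℚ K K) {N : ℕ} (v : Fin N → K) :
    Matrix.det (Matrix.of fun i j : Fin N => (⇑δ)^[(i : ℕ)] (v j)) = 0 ↔
      ∃ c : Fin N → K, (∀ j, δ (c j) = 0) ∧ c ≠ 0 ∧ ∑ j, c j * v j = 0 := by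
  constructor
  · exact wronskian_hard δ N v
  · rintro ⟨c, hcconst, hcne, hcsum⟩
    rw [← Matrix.exists_mulVec_eq_zero_iff]
    refine ⟨c, hcne, ?_⟩
    funext i
    show ∑ j, (⇑δ)^[(i : ℕ)] (v j) * c j = 0
    calc ∑ j, (⇑δ)^[(i : ℕ)] (v j) * c j
        = ∑ j, (⇑δ)^[(i : ℕ)] (c j * v j) := by
          refine Finset.sum_congr rfl fun j _ => ?_
          rw [iter_const_mul δ (hcconst j), mul_comm]
      _ = (⇑δ)^[(i : ℕ)] (∑ j, c j * v j) := (iter_sum δ _ _).symm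
      _ = 0 := by rw [hcsum]; exact Function.iterate_fixed (map_zero _) _
end

section
/- Let n ≥ 1 and d ≥ 1, and let δ be a ℂ-derivation of ℂ[x₀,…,xₙ] = MvPolynomial (Fin (n+1)) ℂ such that δ(xᵢ) is homogeneous of degree d for every i. Fix k ≥ 1 and let N = C(n+k, k). Then the extactic determinant E_k(δ) = det(δ^[i](m_j))_{0 ≤ i ≤ N−1, 1 ≤ j ≤ N}, where (m_1, …, m_N) is an enumeration of the monomials of degree k in x₀,…,xₙ, is homogeneous of degree k·N + (d−1)·C(N, 2). -/
open MvPolynomial Finset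

lemma degree_fintype {σ : Type*} [Fintype σ] (f : σ →₀ ℕ) : f.degree = ∑ i, f i :=
  Finset.sum_subset (Finset.subset_univ _) (fun i _ h => Finsupp.notMem_support_iff.mp h)

lemma deriv_hom {n d : ℕ} (hd : 1 ≤ d)
    (δ : Derivation ℂ (MvPolynomial (Fin (n + 1)) ℂ) (MvPolynomial (Fin (n + 1)) ℂ))
    (hδ : ∀ i, (δ (MvPolynomial.X i)).IsHomogeneous d)
    {p : MvPolynomial (Fin (n + 1)) ℂ} {s : ℕ} (hp : p.IsHomogeneous s) :
    (δ p).IsHomogeneous (s + d - 1) := by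
  have hδeq : δ = MvPolynomial.mkDerivation ℂ (fun i => δ (X i)) :=
    MvPolynomial.derivation_ext fun i => by simp
  rw [hδeq]
  conv_lhs => rw [← p.support_sum_monomial_coeff]
  rw [map_sum]
  apply MvPolynomial.IsHomogeneous.sum
  intro e he
  have hes : e.degree = s := by
    rw [Finsupp.degree_eq_weight_one]; exact hp (MvPolynomial.mem_support_iff.mp he)
  rw [MvPolynomial.mkDerivation_monomial, MvPolynomial.smul_eq_C_mul]
  apply MvPolynomial.IsHomogeneous.C_mul
  apply MvPolynomial.IsHomogeneous.sum
  intro i hi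
  have hi1 : 1 ≤ e i := Nat.one_le_iff_ne_zero.mpr (Finsupp.mem_support_iff.mp hi)
  have hs1 : 1 ≤ s := hes ▸ le_trans hi1 (Finsupp.le_degree i e)
  have hdeg : (e - Finsupp.single i 1).degree = s - 1 := by
    have hle : Finsupp.single i 1 ≤ e := by
      rwa [Finsupp.single_le_iff]
    have hadd : (e - Finsupp.single i 1) + Finsupp.single i 1 = e := tsub_add_cancel_of_le hle
    have := congrArg Finsupp.degree hadd
    rw [Finsupp.degree_eq_weight_one] at this hes ⊢
    rw [map_add] at this
    have h1 : (Finsupp.weight fun _ => 1) (Finsupp.single i 1) = 1 := by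
      rw [← Finsupp.degree_eq_weight_one]
      exact Finsupp.degree_single i 1
    omega
  have : s + d - 1 = (s - 1) + d := by omega
  rw [this]
  dsimp only
  rw [smul_eq_mul]
  exact (MvPolynomial.isHomogeneous_monomial _ hdeg).mul (hδ i)

/-- The extactic determinant `E_k(δ) = det (δ^[i] (m j))`, where `m` enumerates the
`N = C(n+k, k)` monic monomials of degree `k` in `x₀, …, xₙ`, is homogeneous of degree
`k * N + (d - 1) * C(N, 2)` for a derivation `δ` with `δ xᵢ` homogeneous of degree `d`. -/
theorem extactic_det_isHomogeneous (n d k : ℕ) (hn : 1 ≤ n) (hd : 1 ≤ d) (hk : 1 ≤ k)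
    (δ : Derivation ℂ (MvPolynomial (Fin (n + 1)) ℂ) (MvPolynomial (Fin (n + 1)) ℂ))
    (hδ : ∀ i, (δ (MvPolynomial.X i)).IsHomogeneous d)
    (N : ℕ) (hN : N = (n + k).choose k)
    (m : Fin N → {e : Fin (n + 1) →₀ ℕ // ∑ i, e i = k}) (hm : Function.Bijective m) :
    (Matrix.det (Matrix.of fun i j : Fin N =>
        (⇑δ)^[(i : ℕ)] (MvPolynomial.monomial (m j).1 (1 : ℂ)))).IsHomogeneous
      (k * N + (d - 1) * N.choose 2) := by
  have hiter : ∀ (i : ℕ) (j : Fin N),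
      ((⇑δ)^[i] (MvPolynomial.monomial (m j).1 (1 : ℂ))).IsHomogeneous (k + i * (d - 1)) := by
    intro i j
    induction i with
    | zero =>
      simp only [Function.iterate_zero, id_eq, Nat.zero_eq, Nat.mul_zero, Nat.add_zero,
        Nat.zero_mul]
      exact MvPolynomial.isHomogeneous_monomial _ (by rw [degree_fintype]; exact (m j).2)
    | succ i ih =>
      rw [Function.iterate_succ_apply']
      have h := deriv_hom hd δ hδ ih
      have : k + i * (d - 1) + d - 1 = k + (i + 1) * (d - 1) := by
        rcases Nat.exists_eq_add_of_le hd with ⟨e, rfl⟩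
        ring_nf
        omega
      rwa [this] at h
  rw [Matrix.det_apply]
  apply MvPolynomial.IsHomogeneous.sum
  intro σ _
  have hsum : ∑ i : Fin N, (k + (σ i : ℕ) * (d - 1)) = k * N + (d - 1) * N.choose 2 := by
    rw [Finset.sum_add_distrib, Finset.sum_const, Finset.card_univ, Fintype.card_fin,
      smul_eq_mul, ← Finset.sum_mul, Equiv.sum_comp σ (fun i : Fin N => (i : ℕ)),
      Fin.sum_univ_eq_sum_range (fun i => i) N, Finset.sum_range_id, ← Nat.choose_two_right,
      mul_comm N k, mul_comm]
    ring
  have hprod : (∏ i : Fin N, (Matrix.of fun i j : Fin N =>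
      (⇑δ)^[(i : ℕ)] (MvPolynomial.monomial (m j).1 (1 : ℂ))) (σ i) i).IsHomogeneous
      (k * N + (d - 1) * N.choose 2) := by
    rw [← hsum]
    exact MvPolynomial.IsHomogeneous.prod Finset.univ _ _ fun i _ => hiter (σ i) i
  obtain h | h := Int.units_eq_one_or (Equiv.Perm.sign σ)
  · rw [h, one_smul]; exact hprod
  · rw [h, Units.smul_def, Units.val_neg, Units.val_one, neg_smul, one_smul]
    exact hprod.neg
end

section
/- Let n ≥ 1, d ≥ 1, k ≥ 1, and let δ be a ℂ-derivation of ℂ[x₀,…,xₙ] = MvPolynomial (Fin (n+1)) ℂ such that δ(xᵢ) is homogeneous of degree d for every i. Suppose the extactic determinant E_k(δ) = det(δ^[i](m_j))_{0 ≤ i ≤ N−1, 1 ≤ j ≤ N} vanishes, where (m_1, …, m_N) is an enumeration of the N = C(n+k,k) monomials of degree k. Then δ admits a rational first integral: there exist polynomials u, v, linearly independent over ℂ, with v·δ(u) = u·δ(v). -/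
private lemma aux_mulVec_zero {R : Type*} [CommRing R] [IsDomain R] {N : ℕ}
    {M : Matrix (Fin N) (Fin N) R} (h : M.det ≠ 0) {v : Fin N → R}
    (hv : M.mulVec v = 0) : v = 0 := by
  have h2 : M.det • v = 0 := by
    calc M.det • v = (M.det • (1 : Matrix (Fin N) (Fin N) R)).mulVec v := by
          rw [Matrix.smul_mulVec, Matrix.one_mulVec]
      _ = (M.adjugate * M).mulVec v := by rw [Matrix.adjugate_mul]
      _ = M.adjugate.mulVec (M.mulVec v) := by rw [Matrix.mulVec_mulVec]
      _ = 0 := by rw [hv, Matrix.mulVec_zero]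
  funext j
  have := congrFun h2 j
  simp only [Pi.smul_apply, smul_eq_mul, Pi.zero_apply] at this ⊢
  rcases mul_eq_zero.mp this with h' | h'
  · exact absurd h' h
  · exact h'

private lemma aux_wronskian {R : Type*} [CommRing R] [IsDomain R] [Algebra ℂ R]
    (δ : Derivation ℂ R R) :
    ∀ (N : ℕ) (f : Fin N → R),
      Matrix.det (Matrix.of fun i j : Fin N => (⇑δ)^[(i : ℕ)] (f j)) = 0 →
      ∃ b : Fin N → R, b ≠ 0 ∧ (∀ j l, b l * δ (b j) = b j * δ (b l)) ∧
        ∑ j, b j * f j = 0 := by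
  intro N
  induction N with
  | zero =>
    intro f hvan
    rw [Matrix.det_isEmpty] at hvan
    exact absurd hvan one_ne_zero
  | succ N ih =>
    intro f hvan
    by_cases hW : Matrix.det (Matrix.of fun i j : Fin N =>
        (⇑δ)^[(i : ℕ)] (f j.castSucc)) = 0
    · obtain ⟨b, hb0, hpair, hsum⟩ := ih (fun j => f j.castSucc) hW
      refine ⟨Fin.snoc b 0, ?_, ?_, ?_⟩
      · intro h
        apply hb0
        funext j
        have := congrFun h j.castSucc
        simpa [Fin.snoc_castSucc] using this
      · intro j l
        refine Fin.lastCases ?_ (fun j' => ?_) j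
        · simp [Fin.snoc_last]
        · refine Fin.lastCases ?_ (fun l' => ?_) l
          · simp [Fin.snoc_last]
          · simpa [Fin.snoc_castSucc] using hpair j' l'
      · rw [Fin.sum_univ_castSucc]
        simpa [Fin.snoc_castSucc, Fin.snoc_last] using hsum
    · obtain ⟨b, hb0, hbv⟩ := Matrix.exists_mulVec_eq_zero_iff.mpr hvan
      have rel : ∀ i : Fin (N + 1), ∑ j, (⇑δ)^[(i : ℕ)] (f j) * b j = 0 := by
        intro i
        have := congrFun hbv i
        simpa [Matrix.mulVec, dotProduct] using this
      have hlast : b (Fin.last N) ≠ 0 := by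
        intro h0
        have hker : (Matrix.of fun i j : Fin N =>
            (⇑δ)^[(i : ℕ)] (f j.castSucc)).mulVec (fun j => b j.castSucc) = 0 := by
          funext i
          have h1 := rel i.castSucc
          rw [Fin.sum_univ_castSucc] at h1
          simp only [Fin.coe_castSucc, h0, mul_zero, add_zero] at h1
          simpa [Matrix.mulVec, dotProduct] using h1
        have hz := aux_mulVec_zero hW hker
        apply hb0
        funext j
        refine Fin.lastCases h0 (fun j' => congrFun hz j') j
      have hder : ∀ i : Fin N, ∑ j, (⇑δ)^[(i : ℕ)] (f j) * δ (b j) = 0 := by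
        intro i
        have h1 := congrArg δ (rel i.castSucc)
        rw [map_sum, map_zero] at h1
        simp only [Derivation.leibniz, smul_eq_mul] at h1
        rw [Finset.sum_add_distrib] at h1
        have h2 : ∑ j, b j * δ ((⇑δ)^[((i.castSucc : Fin (N+1)) : ℕ)] (f j)) = 0 := by
          have h3 := rel i.succ
          calc ∑ j, b j * δ ((⇑δ)^[((i.castSucc : Fin (N+1)) : ℕ)] (f j))
              = ∑ j, (⇑δ)^[((i.succ : Fin (N+1)) : ℕ)] (f j) * b j := by
                apply Finset.sum_congr rfl
                intro j _
                rw [mul_comm]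
                congr 1
                rw [← Function.iterate_succ_apply' δ]
                simp [Fin.val_succ, Fin.coe_castSucc]
            _ = 0 := h3
        rw [h2, add_zero] at h1
        simpa [Fin.coe_castSucc] using h1
      set c := b (Fin.last N) with hc
      have hprop : ∀ j, c * δ (b j) = δ c * b j := by
        set w : Fin (N + 1) → R := fun j => c * δ (b j) - δ c * b j with hw
        have hfull : ∀ i : Fin N, ∑ j, (⇑δ)^[(i : ℕ)] (f j) * w j = 0 := by
          intro i
          have e1 := hder i
          have e2 := rel i.castSucc
          simp only [Fin.coe_castSucc] at e2
          calc ∑ j, (⇑δ)^[(i : ℕ)] (f j) * w j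
              = c * (∑ j, (⇑δ)^[(i : ℕ)] (f j) * δ (b j))
                - δ c * (∑ j, (⇑δ)^[(i : ℕ)] (f j) * b j) := by
                rw [Finset.mul_sum, Finset.mul_sum, ← Finset.sum_sub_distrib]
                apply Finset.sum_congr rfl
                intro j _
                simp only [hw]
                ring
            _ = 0 := by rw [e1, e2]; ring
        have hker : (Matrix.of fun i j : Fin N =>
            (⇑δ)^[(i : ℕ)] (f j.castSucc)).mulVec (fun j => w j.castSucc) = 0 := by
          funext i
          have h1 := hfull i
          rw [Fin.sum_univ_castSucc] at h1
          have hwl : w (Fin.last N) = 0 := by simp only [hw]; rw [← hc]; ring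
          rw [hwl, mul_zero, add_zero] at h1
          simpa [Matrix.mulVec, dotProduct] using h1
        have hz := aux_mulVec_zero hW hker
        intro j
        have hwj : w j = 0 := by
          refine Fin.lastCases ?_ (fun j' => congrFun hz j') j
          simp only [hw]
          rw [← hc]; ring
        exact sub_eq_zero.mp hwj
      refine ⟨b, hb0, ?_, ?_⟩
      · intro j l
        apply mul_left_cancel₀ hlast
        have h1 := hprop j
        have h2 := hprop l
        linear_combination b l * h1 - b j * h2
      · have h0 := rel 0
        simpa [mul_comm] using h0


/-- Pereira's Theorem 3, projective algebraic form: if the extactic determinant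
`E_k(δ) = det (δ^[i] (m j))` vanishes (with `m` enumerating the `N = C(n+k,k)` monic
monomials of degree `k`), then `δ` admits a rational first integral, i.e. there are
polynomials `u, v`, linearly independent over `ℂ`, with `v * δ u = u * δ v`. -/
theorem rational_first_integral_of_extactic_vanishes (n d k : ℕ)
    (hn : 1 ≤ n) (hd : 1 ≤ d) (hk : 1 ≤ k)
    (δ : Derivation ℂ (MvPolynomial (Fin (n + 1)) ℂ) (MvPolynomial (Fin (n + 1)) ℂ))
    (hδ : ∀ i, (δ (MvPolynomial.X i)).IsHomogeneous d)
    (N : ℕ) (hN : N = (n + k).choose k)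
    (m : Fin N → {e : Fin (n + 1) →₀ ℕ // ∑ i, e i = k}) (hm : Function.Bijective m)
    (hvan : Matrix.det (Matrix.of fun i j : Fin N =>
        (⇑δ)^[(i : ℕ)] (MvPolynomial.monomial (m j).1 (1 : ℂ))) = 0) :
    ∃ u v : MvPolynomial (Fin (n + 1)) ℂ,
      LinearIndependent ℂ ![u, v] ∧ v * δ u = u * δ v := by
  obtain ⟨b, hb0, hpair, hsum⟩ :=
    aux_wronskian δ N (fun j => MvPolynomial.monomial (m j).1 (1 : ℂ)) hvan
  by_cases hind : ∃ j l, LinearIndependent ℂ ![b j, b l]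
  · obtain ⟨j, l, h⟩ := hind
    exact ⟨b j, b l, h, hpair j l⟩
  · exfalso
    push_neg at hind
    obtain ⟨j0, hj0⟩ : ∃ j0, b j0 ≠ 0 := by
      by_contra h
      push_neg at h
      exact hb0 (funext h)
    have hγ : ∀ j, ∃ γ : ℂ, b j = γ • b j0 := by
      intro j
      have h := hind j j0
      rw [LinearIndependent.pair_iff] at h
      push_neg at h
      obtain ⟨s, t, hst, hne⟩ := h
      by_cases hs : s = 0
      · subst hs
        rw [zero_smul, zero_add] at hst
        rcases smul_eq_zero.mp hst with ht | hb
        · exact absurd (hne rfl) (fun h => h ht)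
        · exact absurd hb hj0
      · refine ⟨-(s⁻¹ * t), ?_⟩
        have h1 : s • b j = (-t) • b j0 := by
          rw [neg_smul]
          exact eq_neg_of_add_eq_zero_left hst
        calc b j = s⁻¹ • (s • b j) := by rw [smul_smul, inv_mul_cancel₀ hs, one_smul]
          _ = s⁻¹ • ((-t) • b j0) := by rw [h1]
          _ = (-(s⁻¹ * t)) • b j0 := by rw [smul_smul]; ring_nf
    choose γ hγ using hγ
    have hγ0 : γ j0 ≠ 0 := by
      intro h
      apply hj0
      have := hγ j0
      rw [h, zero_smul] at this
      exact this
    have hsum2 : ∑ j, γ j • (MvPolynomial.monomial (m j).1 (1 : ℂ)) = 0 := by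
      have h1 : b j0 * ∑ j, γ j • (MvPolynomial.monomial (m j).1 (1 : ℂ)) = 0 := by
        rw [Finset.mul_sum]
        rw [← hsum]
        apply Finset.sum_congr rfl
        intro j _
        rw [hγ j, smul_mul_assoc, mul_smul_comm]
      rcases mul_eq_zero.mp h1 with h | h
      · exact absurd h hj0
      · exact h
    have hco := congrArg (MvPolynomial.coeff (m j0).1) hsum2
    rw [MvPolynomial.coeff_sum, MvPolynomial.coeff_zero] at hco
    rw [Finset.sum_eq_single j0] at hco
    · apply hγ0
      simpa [MvPolynomial.coeff_monomial] using hco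
    · intro j _ hj
      rw [MvPolynomial.smul_monomial, MvPolynomial.coeff_monomial, if_neg]
      intro he
      exact hj (hm.injective (Subtype.ext he))
    · intro h
      exact absurd (Finset.mem_univ j0) h
end

section
/- Let n ≥ 1, d ≥ 1, k ≥ 1, and let δ be a ℂ-derivation of ℂ[x₀,…,xₙ] = MvPolynomial (Fin (n+1)) ℂ such that δ(xᵢ) is homogeneous of degree d for every i. Suppose δ admits no rational first integral, i.e., there is no pair of polynomials u, v, linearly independent over ℂ, with v·δ(u) = u·δ(v). Then for every finite set S of pairwise non-associated irreducible homogeneous polynomials of degree k, each δ-invariant (f ∣ δ(f) for every f ∈ S), one has k·|S| ≤ k·C(n+k,k) + (d−1)·C(C(n+k,k), 2). -/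
namespace PereiraAux


section Wronskian
variable {K : Type*} [Field K] {D : K → K}
  (hadd : ∀ x y, D (x + y) = D x + D y)
  (hmul : ∀ x y, D (x * y) = x * D y + y * D x)

include hadd in
lemma D_zero : D 0 = 0 := by
  have h0 : D (0 + 0) = D 0 + D 0 := hadd 0 0
  rw [add_zero] at h0
  have h : D 0 + D 0 = D 0 + 0 := by rw [add_zero]; exact h0.symm
  exact add_left_cancel h

include hadd hmul in
lemma D_one : D 1 = 0 := by
  have h0 : D (1 * 1) = 1 * D 1 + 1 * D 1 := hmul 1 1
  rw [mul_one, one_mul] at h0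
  have h : D 1 + D 1 = D 1 + 0 := by rw [add_zero]; exact h0.symm
  exact add_left_cancel h

include hadd in
lemma D_sum {ι : Type*} (s : Finset ι) (f : ι → K) :
    D (∑ i ∈ s, f i) = ∑ i ∈ s, D (f i) := by
  classical
  induction s using Finset.induction_on with
  | empty => simpa using D_zero hadd
  | @insert _ _ hx ih => rw [Finset.sum_insert hx, hadd, ih, Finset.sum_insert hx]

include hadd hmul in
/-- The Wronskian lemma: if the Wronskian determinant of a family vanishes, the family is
linearly dependent over the constants of `D`. -/
theorem wronskian_dependence :
    ∀ (N : ℕ) (v : Fin N → K),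
      (Matrix.of fun i j : Fin N => D^[(j : ℕ)] (v i)).det = 0 →
      ∃ c : Fin N → K, (∀ i, D (c i) = 0) ∧ (∃ i, c i ≠ 0) ∧ ∑ i, c i * v i = 0 := by
  intro N
  induction N with
  | zero =>
    intro v h
    rw [Matrix.det_fin_zero] at h
    exact absurd h one_ne_zero
  | succ m IH =>
    intro v h
    set M : Matrix (Fin (m + 1)) (Fin (m + 1)) K :=
      Matrix.of fun i j => D^[(j : ℕ)] (v i) with hM
    set M' : Matrix (Fin m) (Fin m) K :=
      Matrix.of fun i j => D^[(j : ℕ)] (v i.castSucc) with hM'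
    by_cases hW : M'.det = 0
    · obtain ⟨c, hc0, ⟨i0, hi0⟩, hcsum⟩ := IH (fun i => v i.castSucc) hW
      refine ⟨Fin.snoc c 0, ?_, ⟨i0.castSucc, by simpa using hi0⟩, ?_⟩
      · intro i
        induction i using Fin.lastCases with
        | last => simpa using D_zero hadd
        | cast i => simpa using hc0 i
      · rw [Fin.sum_univ_castSucc]
        simpa using hcsum
    · -- main case
      obtain ⟨a, ha, haM⟩ := Matrix.exists_vecMul_eq_zero_iff.mpr h
      have hrel : ∀ j : Fin (m + 1), ∑ i, a i * M i j = 0 := by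
        intro j
        have := congrFun haM j
        simpa [Matrix.vecMul, dotProduct] using this
      have hlast : a (Fin.last m) ≠ 0 := by
        intro h0
        have hb : ∀ i : Fin m, a i.castSucc = 0 := by
          by_contra hb
          push_neg at hb
          obtain ⟨i1, hi1⟩ := hb
          apply hW
          rw [← Matrix.exists_vecMul_eq_zero_iff]
          refine ⟨fun i => a i.castSucc, ?_, ?_⟩
          · intro hz; exact hi1 (congrFun hz i1)
          · funext j
            have := hrel j.castSucc
            rw [Fin.sum_univ_castSucc, h0, zero_mul, add_zero] at this
            simpa [Matrix.vecMul, dotProduct, hM, hM'] using this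
        apply ha
        funext i
        induction i using Fin.lastCases with
        | last => exact h0
        | cast i => exact hb i
      set c : Fin (m + 1) → K := fun i => (a (Fin.last m))⁻¹ * a i with hc
      have hclast : c (Fin.last m) = 1 := inv_mul_cancel₀ hlast
      have hcrel : ∀ j : Fin (m + 1), ∑ i, c i * M i j = 0 := by
        intro j
        have := hrel j
        calc ∑ i, c i * M i j = (a (Fin.last m))⁻¹ * ∑ i, a i * M i j := by
              rw [Finset.mul_sum]; congr 1; funext i; ring
          _ = 0 := by rw [this, mul_zero]
      have hDrow : ∀ j : Fin m, ∑ i, D (c i) * M i j.castSucc = 0 := by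
        intro j
        have h1 : D (∑ i, c i * M i j.castSucc) = 0 := by rw [hcrel j.castSucc, D_zero hadd]
        rw [D_sum hadd] at h1
        have h2 : ∀ i, D (c i * M i j.castSucc) = c i * M i j.succ + M i j.castSucc * D (c i) := by
          intro i
          rw [hmul]
          congr 2
          show D (D^[((j.castSucc : Fin (m+1)) : ℕ)] (v i)) = D^[((j.succ : Fin (m+1)) : ℕ)] (v i)
          rw [Fin.coe_castSucc, Fin.val_succ, Function.iterate_succ_apply']
        rw [Finset.sum_congr rfl fun i _ => h2 i, Finset.sum_add_distrib, hcrel j.succ,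
          zero_add] at h1
        calc ∑ i, D (c i) * M i j.castSucc = ∑ i, M i j.castSucc * D (c i) := by
              congr 1; funext i; ring
          _ = 0 := h1
      have hDc : ∀ i, D (c i) = 0 := by
        have hb : ∀ i : Fin m, D (c i.castSucc) = 0 := by
          by_contra hb
          push_neg at hb
          obtain ⟨i1, hi1⟩ := hb
          apply hW
          rw [← Matrix.exists_vecMul_eq_zero_iff]
          refine ⟨fun i => D (c i.castSucc), ?_, ?_⟩
          · intro hz; exact hi1 (congrFun hz i1)
          · funext j
            have := hDrow j
            rw [Fin.sum_univ_castSucc, hclast, D_one hadd hmul, zero_mul, add_zero] at this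
            simpa [Matrix.vecMul, dotProduct, hM, hM'] using this
        intro i
        induction i using Fin.lastCases with
        | last => rw [hclast]; exact D_one hadd hmul
        | cast i => exact hb i
      refine ⟨c, hDc, ⟨Fin.last m, by rw [hclast]; exact one_ne_zero⟩, ?_⟩
      have := hcrel 0
      simpa [hM] using this

end Wronskian


section FracDeriv
variable {A : Type*} [CommRing A] [IsDomain A] [Algebra ℂ A]
  (δ : Derivation ℂ A A)

local notation "K" => FractionRing A
local notation "φ" => algebraMap A (FractionRing A)

/-- Extension of a derivation to the fraction field, as a bare function. -/
noncomputable def fracDeriv (x : K) : K :=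
  (φ (δ (IsLocalization.sec (nonZeroDivisors A) x).1)
    - x * φ (δ ((IsLocalization.sec (nonZeroDivisors A) x).2 : A)))
    / φ ((IsLocalization.sec (nonZeroDivisors A) x).2 : A)

lemma fracDeriv_spec (u v : A) (hv : v ∈ nonZeroDivisors A) (x : K)
    (hx : x * φ v = φ u) :
    fracDeriv δ x = (φ (δ u) - x * φ (δ v)) / φ v := by
  set u₀ := (IsLocalization.sec (nonZeroDivisors A) x).1 with hu₀
  set v₀ := ((IsLocalization.sec (nonZeroDivisors A) x).2 : A) with hv₀
  have hv₀mem : v₀ ∈ nonZeroDivisors A := (IsLocalization.sec (nonZeroDivisors A) x).2.2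
  have hx₀ : x * φ v₀ = φ u₀ := IsLocalization.sec_spec (nonZeroDivisors A) x
  have hV : φ v ≠ 0 := IsFractionRing.to_map_ne_zero_of_mem_nonZeroDivisors hv
  have hV₀ : φ v₀ ≠ 0 := IsFractionRing.to_map_ne_zero_of_mem_nonZeroDivisors hv₀mem
  have e1 : u * v₀ = u₀ * v := by
    apply IsFractionRing.injective A K
    rw [map_mul, map_mul, ← hx, ← hx₀]; ring
  have e2 : u • δ v₀ + v₀ • δ u = u₀ • δ v + v • δ u₀ := by
    have := congrArg δ e1
    rw [Derivation.leibniz, Derivation.leibniz] at this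
    rw [this]
  simp only [smul_eq_mul] at e2
  have e2K : φ u * φ (δ v₀) + φ v₀ * φ (δ u) = φ u₀ * φ (δ v) + φ v * φ (δ u₀) := by
    rw [← map_mul, ← map_mul, ← map_mul, ← map_mul, ← map_add, ← map_add, e2]
  have e1K : φ u * φ v₀ = φ u₀ * φ v := by rw [← map_mul, ← map_mul, e1]
  rw [fracDeriv, ← hu₀, ← hv₀, div_eq_div_iff hV₀ hV]
  apply mul_left_cancel₀ hV
  apply mul_left_cancel₀ hV₀
  have hxu : x * φ v = φ u := hx
  have hxu₀ : x * φ v₀ = φ u₀ := hx₀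
  linear_combination (-(φ v * φ v₀)) * e2K - (φ (δ v₀) * φ v * φ v₀) * hxu
    + (φ (δ v) * φ v * φ v₀) * hxu₀

lemma fracDeriv_algebraMap (p : A) : fracDeriv δ (φ p) = φ (δ p) := by
  have h1 : (1 : A) ∈ nonZeroDivisors A := one_mem _
  rw [fracDeriv_spec δ p 1 h1 (φ p) (by rw [map_one, mul_one])]
  rw [Derivation.map_one_eq_zero, map_zero, mul_zero, sub_zero, map_one, div_one]

lemma fracDeriv_add (x y : K) : fracDeriv δ (x + y) = fracDeriv δ x + fracDeriv δ y := by
  obtain ⟨⟨u₁, v₁⟩, hx⟩ := IsLocalization.surj (nonZeroDivisors A) x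
  obtain ⟨⟨u₂, v₂⟩, hy⟩ := IsLocalization.surj (nonZeroDivisors A) y
  simp only at hx hy
  have hv₁ : (v₁ : A) ∈ nonZeroDivisors A := v₁.2
  have hv₂ : (v₂ : A) ∈ nonZeroDivisors A := v₂.2
  have hV₁ : φ (v₁ : A) ≠ 0 := IsFractionRing.to_map_ne_zero_of_mem_nonZeroDivisors hv₁
  have hV₂ : φ (v₂ : A) ≠ 0 := IsFractionRing.to_map_ne_zero_of_mem_nonZeroDivisors hv₂
  have hxy : (x + y) * φ ((v₁ : A) * (v₂ : A)) = φ (u₁ * (v₂ : A) + u₂ * (v₁ : A)) := by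
    rw [map_mul, map_add, map_mul, map_mul, ← hx, ← hy]; ring
  rw [fracDeriv_spec δ _ _ (mul_mem hv₁ hv₂) _ hxy,
    fracDeriv_spec δ u₁ (v₁ : A) hv₁ x hx, fracDeriv_spec δ u₂ (v₂ : A) hv₂ y hy,
    div_add_div _ _ hV₁ hV₂, div_eq_div_iff
      (IsFractionRing.to_map_ne_zero_of_mem_nonZeroDivisors (mul_mem hv₁ hv₂))
      (mul_ne_zero hV₁ hV₂)]
  simp only [map_add, map_mul, Derivation.leibniz, smul_eq_mul]
  ring_nf
  linear_combination (-(φ (δ (v₂ : A)) * (φ (v₁ : A) * φ (v₂ : A)))) * hx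
    + (-(φ (δ (v₁ : A)) * (φ (v₁ : A) * φ (v₂ : A)))) * hy

lemma fracDeriv_mul (x y : K) :
    fracDeriv δ (x * y) = x * fracDeriv δ y + y * fracDeriv δ x := by
  obtain ⟨⟨u₁, v₁⟩, hx⟩ := IsLocalization.surj (nonZeroDivisors A) x
  obtain ⟨⟨u₂, v₂⟩, hy⟩ := IsLocalization.surj (nonZeroDivisors A) y
  simp only at hx hy
  have hv₁ : (v₁ : A) ∈ nonZeroDivisors A := v₁.2
  have hv₂ : (v₂ : A) ∈ nonZeroDivisors A := v₂.2
  have hV₁ : φ (v₁ : A) ≠ 0 := IsFractionRing.to_map_ne_zero_of_mem_nonZeroDivisors hv₁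
  have hV₂ : φ (v₂ : A) ≠ 0 := IsFractionRing.to_map_ne_zero_of_mem_nonZeroDivisors hv₂
  have hxy : (x * y) * φ ((v₁ : A) * (v₂ : A)) = φ (u₁ * u₂) := by
    rw [map_mul, map_mul, ← hx, ← hy]; ring
  rw [fracDeriv_spec δ _ _ (mul_mem hv₁ hv₂) _ hxy,
    fracDeriv_spec δ u₁ (v₁ : A) hv₁ x hx, fracDeriv_spec δ u₂ (v₂ : A) hv₂ y hy]
  rw [mul_div_assoc', mul_div_assoc', div_add_div _ _ hV₂ hV₁, div_eq_div_iff
      (IsFractionRing.to_map_ne_zero_of_mem_nonZeroDivisors (mul_mem hv₁ hv₂))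
      (mul_ne_zero hV₂ hV₁)]
  simp only [map_mul, Derivation.leibniz, smul_eq_mul, map_add]
  linear_combination (-(φ (δ u₂) * (φ (v₁ : A) * φ (v₂ : A)))) * hx
    + (-(φ (δ u₁) * (φ (v₁ : A) * φ (v₂ : A)))) * hy

end FracDeriv

open MvPolynomial


section Homog
variable {σ : Type*} {d : ℕ} (δ : Derivation ℂ (MvPolynomial σ ℂ) (MvPolynomial σ ℂ))

lemma degree_sub_single (s : σ →₀ ℕ) (i : σ) (hi : i ∈ s.support) :
    (s - Finsupp.single i 1).degree = s.degree - 1 ∧ 1 ≤ s.degree := by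
  classical
  have hle : Finsupp.single i 1 ≤ s := by
    rw [Finsupp.single_le_iff]
    exact Nat.one_le_iff_ne_zero.mpr (Finsupp.mem_support_iff.mp hi)
  have hadd : (s - Finsupp.single i 1) + Finsupp.single i 1 = s := tsub_add_cancel_of_le hle
  have hdeg1 : (Finsupp.single i 1).degree = 1 := by
    exact Finsupp.degree_single i 1
  have hsum : (s - Finsupp.single i 1).degree + 1 = s.degree := by
    conv_rhs => rw [← hadd]
    rw [Finsupp.degree_eq_weight_one, map_add, ← Finsupp.degree_eq_weight_one, hdeg1]
  omega

lemma isHomogeneous_csmul {p : MvPolynomial σ ℂ} {m : ℕ} (c : ℂ) (hp : p.IsHomogeneous m) :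
    (c • p).IsHomogeneous m := by
  rw [smul_eq_C_mul]
  simpa using (isHomogeneous_C σ c).mul hp

include δ in
lemma deriv_isHomogeneous (hδ : ∀ i, (δ (X i)).IsHomogeneous d) {m : ℕ}
    (p : MvPolynomial σ ℂ) (hp : p.IsHomogeneous m) : (δ p).IsHomogeneous (m - 1 + d) := by
  classical
  have hδeq : δ = mkDerivation ℂ (fun i => δ (X i)) :=
    derivation_ext fun i => (mkDerivation_X ℂ (fun i => δ (X i)) i).symm
  have hsum := support_sum_monomial_coeff p
  rw [← hsum, map_sum]
  apply IsHomogeneous.sum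
  intro s hs
  have hsdeg : s.degree = m := by
    by_contra hne
    exact (mem_support_iff.mp hs) (hp.coeff_eq_zero hne)
  rw [hδeq, mkDerivation_monomial]
  apply isHomogeneous_csmul
  rw [Finsupp.sum]
  apply IsHomogeneous.sum
  intro i hi
  obtain ⟨hdeg, hm1⟩ := degree_sub_single s i hi
  have h1 : ((monomial (s - Finsupp.single i 1)) ((s i : ℂ))).IsHomogeneous (m - 1) :=
    isHomogeneous_monomial _ (by rw [hdeg, hsdeg])
  rw [smul_eq_mul]
  exact h1.mul (hδ i)

include δ in
lemma iterate_deriv_isHomogeneous (hδ : ∀ i, (δ (X i)).IsHomogeneous d) (hd : 1 ≤ d) {k : ℕ}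
    (hk : 1 ≤ k) (j : ℕ) (p : MvPolynomial σ ℂ) (hp : p.IsHomogeneous k) :
    (δ^[j] p).IsHomogeneous (k + j * (d - 1)) := by
  induction j with
  | zero => simpa using hp
  | succ j ih =>
    rw [Function.iterate_succ_apply']
    have h := deriv_isHomogeneous δ hδ _ ih
    have : k + j * (d - 1) - 1 + d = k + (j + 1) * (d - 1) := by
      obtain ⟨e, rfl⟩ : ∃ e, d = e + 1 := ⟨d - 1, by omega⟩
      have : (j + 1) * (e + 1 - 1) = j * (e + 1 - 1) + e := by ring_nf; omega
      omega
    rwa [this] at h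

include δ in
lemma iterate_deriv_add (j : ℕ) (p q : MvPolynomial σ ℂ) :
    δ^[j] (p + q) = δ^[j] p + δ^[j] q := by
  induction j with
  | zero => rfl
  | succ j ih => rw [Function.iterate_succ_apply', Function.iterate_succ_apply',
      Function.iterate_succ_apply', ih, map_add]

include δ in
lemma deriv_C_mul (a : ℂ) (p : MvPolynomial σ ℂ) : δ (C a * p) = C a * δ p := by
  rw [Derivation.leibniz, derivation_C, smul_eq_mul, smul_eq_mul, mul_zero, add_zero]

include δ in
lemma iterate_deriv_C_mul (j : ℕ) (a : ℂ) (p : MvPolynomial σ ℂ) :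
    δ^[j] (C a * p) = C a * δ^[j] p := by
  induction j with
  | zero => rfl
  | succ j ih => rw [Function.iterate_succ_apply', Function.iterate_succ_apply', ih,
      deriv_C_mul]

include δ in
lemma iterate_deriv_sum {ι : Type*} (s : Finset ι) (f : ι → MvPolynomial σ ℂ) (j : ℕ) :
    δ^[j] (∑ i ∈ s, f i) = ∑ i ∈ s, δ^[j] (f i) := by
  classical
  induction s using Finset.induction_on with
  | empty =>
    simp only [Finset.sum_empty]
    induction j with
    | zero => rfl
    | succ j ih => rw [Function.iterate_succ_apply', ih, map_zero]
  | @insert _ _ hx ih => rw [Finset.sum_insert hx, iterate_deriv_add, ih, Finset.sum_insert hx]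

include δ in
lemma dvd_iterate_deriv (f : MvPolynomial σ ℂ) (hf : f ∣ δ f) (j : ℕ) : f ∣ δ^[j] f := by
  induction j with
  | zero => simp
  | succ j ih =>
    rw [Function.iterate_succ_apply']
    obtain ⟨h, hh⟩ := ih
    rw [hh, Derivation.leibniz, smul_eq_mul, smul_eq_mul]
    exact dvd_add (Dvd.intro _ rfl) (Dvd.dvd.mul_left hf h)

end Homog

end PereiraAux

section MainProof

open MvPolynomial

lemma finsupp_degree_add {σ : Type*} (a b : σ →₀ ℕ) :
    (a + b).degree = a.degree + b.degree := by
  simp only [Finsupp.degree_eq_weight_one, map_add]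

end MainProof

set_option maxHeartbeats 2000000 in
set_option synthInstance.maxHeartbeats 400000 in
open PereiraAux MvPolynomial in
/-- Main Theorem 1 of the paper, specialized to `X = ℙⁿ` and hypersurfaces of degree `k`:
if `δ` (a degree-`d` foliation) admits no rational first integral, then for every finite set
`S` of pairwise non-associated irreducible homogeneous `δ`-invariant polynomials of degree
`k` one has `k * |S| ≤ k * C(n+k, k) + (d-1) * C(C(n+k, k), 2)`. -/
theorem card_invariant_bound_of_no_first_integral (n d k : ℕ)
    (hn : 1 ≤ n) (hd : 1 ≤ d) (hk : 1 ≤ k)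
    (δ : Derivation ℂ (MvPolynomial (Fin (n + 1)) ℂ) (MvPolynomial (Fin (n + 1)) ℂ))
    (hδ : ∀ i, (δ (MvPolynomial.X i)).IsHomogeneous d)
    (hnofi : ¬ ∃ u v : MvPolynomial (Fin (n + 1)) ℂ,
        LinearIndependent ℂ ![u, v] ∧ v * δ u = u * δ v)
    (S : Finset (MvPolynomial (Fin (n + 1)) ℂ))
    (hirr : ∀ f ∈ S, Irreducible f)
    (hhom : ∀ f ∈ S, f.IsHomogeneous k)
    (hinv : ∀ f ∈ S, f ∣ δ f)
    (hassoc : ∀ f ∈ S, ∀ g ∈ S, f ≠ g → ¬ Associated f g) :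
    k * S.card ≤ k * (n + k).choose k + (d - 1) * ((n + k).choose k).choose 2 := by
  classical
  -- the index type of degree-`k` monomials
  have eSym : Sym (Fin (n + 1)) k ≃ {s : Fin (n + 1) →₀ ℕ // Finsupp.degree s = k} :=
    (Sym.equivNatSum (Fin (n + 1)) k).trans (Equiv.subtypeEquivRight (fun P => Iff.rfl))
  haveI : Fintype {s : Fin (n + 1) →₀ ℕ // Finsupp.degree s = k} := Fintype.ofEquiv _ eSym
  set N := (n + k).choose k with hN
  have hcard : Fintype.card {s : Fin (n + 1) →₀ ℕ // Finsupp.degree s = k} = N := by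
    rw [← Fintype.card_congr eSym, Sym.card_sym_eq_choose, Fintype.card_fin, hN]
    congr 1
    omega
  set e := (Fintype.equivFinOfCardEq hcard).symm with he
  set w : Fin N → MvPolynomial (Fin (n + 1)) ℂ := fun i => monomial (e i).1 1 with hw
  set M : Matrix (Fin N) (Fin N) (MvPolynomial (Fin (n + 1)) ℂ) :=
    Matrix.of fun i j => δ^[(j : ℕ)] (w i) with hM
  set E := M.det with hE
  -- decomposition of homogeneous polynomials in the monomial basis
  have hdecomp : ∀ f : MvPolynomial (Fin (n + 1)) ℂ, f.IsHomogeneous k →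
      (∑ i : Fin N, C (coeff (e i).1 f) * w i) = f := by
    intro f hf
    apply MvPolynomial.ext
    intro t
    rw [coeff_sum]
    simp only [hw, C_mul_monomial, mul_one, coeff_monomial]
    by_cases ht : Finsupp.degree t = k
    · have hiff : ∀ i : Fin N, ((e i).1 = t) ↔ (i = e.symm ⟨t, ht⟩) := by
        intro i
        constructor
        · intro h
          have : e i = ⟨t, ht⟩ := Subtype.ext h
          rw [← this, Equiv.symm_apply_apply]
        · intro h; rw [h, Equiv.apply_symm_apply]
      calc ∑ i : Fin N, (if (e i).1 = t then coeff (e i).1 f else 0)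
          = ∑ i : Fin N, (if i = e.symm ⟨t, ht⟩ then coeff (e i).1 f else 0) := by
            apply Finset.sum_congr rfl
            intro i _
            simp only [hiff i]
        _ = coeff (e (e.symm ⟨t, ht⟩)).1 f := by rw [Finset.sum_ite_eq' Finset.univ]; simp
        _ = coeff t f := by rw [Equiv.apply_symm_apply]
    · rw [hf.coeff_eq_zero ht]
      apply Finset.sum_eq_zero
      intro i _
      rw [if_neg]
      intro h
      exact ht (by rw [← h]; exact (e i).2)
  -- homogeneity of the matrix entries
  have hwhom : ∀ i : Fin N, (w i).IsHomogeneous k := fun i => isHomogeneous_monomial 1 (e i).2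
  have hMhom : ∀ i j : Fin N, (M i j).IsHomogeneous (k + (j : ℕ) * (d - 1)) := fun i j =>
    iterate_deriv_isHomogeneous δ hδ hd hk _ _ (hwhom i)
  set Dg := N * k + (d - 1) * N.choose 2 with hDg
  have hsumdeg : ∑ j : Fin N, (k + (j : ℕ) * (d - 1)) = Dg := by
    rw [Finset.sum_add_distrib, Finset.sum_const, Finset.card_univ, Fintype.card_fin,
      smul_eq_mul, ← Finset.sum_mul]
    have h1 : ∑ j : Fin N, (j : ℕ) = N.choose 2 := by
      rw [Fin.sum_univ_eq_sum_range (fun i => i)]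
      have h2 := Finset.sum_range_id_mul_two N
      rw [Nat.choose_two_right]
      omega
    rw [h1, hDg, mul_comm (N.choose 2)]
  have hEhom : E.IsHomogeneous Dg := by
    rw [hE, Matrix.det_apply]
    apply IsHomogeneous.sum
    intro σp _
    have hprod : (∏ j : Fin N, M (σp j) j).IsHomogeneous Dg := by
      rw [← hsumdeg]
      exact IsHomogeneous.prod _ _ _ (fun j _ => hMhom (σp j) j)
    rcases Int.units_eq_one_or (Equiv.Perm.sign σp) with hs | hs <;> rw [hs]
    · simpa using hprod
    · have : (-1 : ℤˣ) • (∏ j : Fin N, M (σp j) j) = -(∏ j : Fin N, M (σp j) j) := by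
        simp
      rw [this]
      exact hprod.neg
  by_cases hE0 : E = 0
  · -- the Wronskian vanishes: produce a rational first integral, contradiction
    exfalso
    apply hnofi
    set φ := algebraMap (MvPolynomial (Fin (n + 1)) ℂ)
      (FractionRing (MvPolynomial (Fin (n + 1)) ℂ)) with hφ
    have hφinj : Function.Injective φ := IsFractionRing.injective _ _
    have hφD : ∀ (j : ℕ) (p : MvPolynomial (Fin (n + 1)) ℂ),
        (fracDeriv δ)^[j] (φ p) = φ (δ^[j] p) := by
      intro j
      induction j with
      | zero => intro p; rfl
      | succ j ih =>
        intro p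
        rw [Function.iterate_succ_apply', Function.iterate_succ_apply' (⇑δ) j p, ih,
          fracDeriv_algebraMap]
    have hdet0 : (Matrix.of fun i j : Fin N =>
        (fracDeriv δ)^[(j : ℕ)] (φ (w i))).det = 0 := by
      have hmap : (Matrix.of fun i j : Fin N => (fracDeriv δ)^[(j : ℕ)] (φ (w i)))
          = φ.mapMatrix M := by
        ext i j
        simp only [Matrix.of_apply, RingHom.mapMatrix_apply, Matrix.map_apply, hM]
        exact hφD _ _
      rw [hmap, ← RingHom.map_det, ← hE, hE0, map_zero]
    obtain ⟨c, hc0, ⟨i0, hi0⟩, hcsum⟩ :=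
      wronskian_dependence (fracDeriv_add δ) (fracDeriv_mul δ) N (fun i => φ (w i)) hdet0
    by_cases hall : ∀ i : Fin N, ∃ a : ℂ, c i = φ (C a)
    · exfalso
      choose a ha using hall
      have hzero : (∑ i : Fin N, C (a i) * w i) = 0 := by
        apply hφinj
        rw [map_sum, map_zero]
        calc ∑ i : Fin N, φ (C (a i) * w i) = ∑ i : Fin N, c i * φ (w i) := by
              apply Finset.sum_congr rfl
              intro i _
              rw [map_mul, ← ha i]
          _ = 0 := hcsum
      have hcoeff := congrArg (coeff (e i0).1) hzero
      rw [coeff_sum] at hcoeff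
      simp only [C_mul_monomial, mul_one, coeff_monomial, coeff_zero, hw] at hcoeff
      have hiff : ∀ i : Fin N, ((e i).1 = (e i0).1) ↔ (i = i0) := by
        intro i
        constructor
        · intro h; exact e.injective (Subtype.ext h)
        · intro h; rw [h]
      rw [Finset.sum_congr rfl (fun i _ => by rw [if_congr (hiff i) rfl rfl]),
        Finset.sum_ite_eq' Finset.univ] at hcoeff
      simp only [Finset.mem_univ, if_true] at hcoeff
      apply hi0
      rw [ha i0, hcoeff, map_zero, map_zero]
    · push_neg at hall
      obtain ⟨i1, hi1⟩ := hall
      obtain ⟨⟨u, v⟩, huv⟩ := IsLocalization.surj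
        (nonZeroDivisors (MvPolynomial (Fin (n + 1)) ℂ)) (c i1)
      simp only at huv
      have hv0 : (v : MvPolynomial (Fin (n + 1)) ℂ) ≠ 0 := nonZeroDivisors.ne_zero v.2
      have hVne : φ (v : MvPolynomial (Fin (n + 1)) ℂ) ≠ 0 :=
        IsFractionRing.to_map_ne_zero_of_mem_nonZeroDivisors v.2
      have hDuv := congrArg (fracDeriv δ) huv
      rw [fracDeriv_mul δ, fracDeriv_algebraMap δ, fracDeriv_algebraMap δ, hc0 i1,
        mul_zero, add_zero] at hDuv
      -- hDuv : c i1 * φ (δ v) = φ (δ u)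
      have hkey : (v : MvPolynomial (Fin (n + 1)) ℂ) * δ u = u * δ (v : _) := by
        apply hφinj
        rw [map_mul, map_mul, ← hDuv, ← huv]
        ring
      refine ⟨u, v, ?_, hkey⟩
      rw [LinearIndependent.pair_iff]
      intro s t hst
      have hst2 := congrArg φ hst
      rw [map_zero, smul_eq_C_mul, smul_eq_C_mul, map_add, map_mul, map_mul, ← huv] at hst2
      -- hst2 : φ (C s) * (c i1 * φ v) + φ (C t) * φ v = 0
      have hst3 : (φ (C s) * c i1 + φ (C t)) * φ (v : _) = 0 := by
        rw [add_mul]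
        linear_combination hst2
      have hst4 : φ (C s) * c i1 + φ (C t) = 0 := by
        rcases mul_eq_zero.mp hst3 with h | h
        · exact h
        · exact absurd h hVne
      by_cases hs : s = 0
      · subst hs
        refine ⟨rfl, ?_⟩
        simp only [map_zero, zero_mul, zero_add] at hst4
        have hCt : C t = (0 : MvPolynomial (Fin (n + 1)) ℂ) := by
          apply hφinj; rw [hst4, map_zero]
        have hCt2 : (C t : MvPolynomial (Fin (n + 1)) ℂ) = C 0 := by rw [map_zero]; exact hCt
        exact C_injective (Fin (n + 1)) ℂ hCt2
      · exfalso
        apply hi1 (-t / s)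
        have hCs : φ (C s) ≠ 0 := by
          intro h
          apply hs
          have hCs1 : C s = (0 : MvPolynomial (Fin (n + 1)) ℂ) := by
            apply hφinj; rw [h, map_zero]
          have hCs2 : (C s : MvPolynomial (Fin (n + 1)) ℂ) = C 0 := by rw [map_zero]; exact hCs1
          exact C_injective (Fin (n + 1)) ℂ hCs2
        apply mul_left_cancel₀ hCs
        rw [← map_mul, ← C_mul]
        have hts : s * (-t / s) = -t := by
          field_simp
        rw [hts]
        have : (C (-t) : MvPolynomial (Fin (n + 1)) ℂ) = -C t := by simp
        rw [this, map_neg]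
        linear_combination hst4
  · -- E ≠ 0 : divisibility and degree count
    have hfdvd : ∀ f ∈ S, f ∣ E := by
      intro f hf
      have hfh := hhom f hf
      have hf0 : f ≠ 0 := (hirr f hf).ne_zero
      obtain ⟨t, ht⟩ : ∃ t, coeff t f ≠ 0 := by
        by_contra hco
        push_neg at hco
        exact hf0 (MvPolynomial.ext _ _ (fun t => by rw [hco t, coeff_zero]))
      have htdeg : Finsupp.degree t = k := by
        by_contra hne
        exact ht (hfh.coeff_eq_zero hne)
      set i0 := e.symm ⟨t, htdeg⟩ with hi0
      have hrow : (fun j : Fin N => δ^[(j : ℕ)] f)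
          = ∑ i : Fin N, (C (coeff (e i).1 f) : MvPolynomial (Fin (n + 1)) ℂ) • M i := by
        funext j
        rw [Finset.sum_apply]
        calc δ^[(j : ℕ)] f = δ^[(j : ℕ)] (∑ i : Fin N, C (coeff (e i).1 f) * w i) := by
              rw [hdecomp f hfh]
          _ = ∑ i : Fin N, C (coeff (e i).1 f) * δ^[(j : ℕ)] (w i) := by
              rw [iterate_deriv_sum δ]
              exact Finset.sum_congr rfl fun i _ => iterate_deriv_C_mul δ _ _ _
          _ = ∑ i : Fin N, (C (coeff (e i).1 f) • M i) j := by
              apply Finset.sum_congr rfl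
              intro i _
              rw [Pi.smul_apply, smul_eq_mul]
              rfl
      have hdet : (M.updateRow i0 (fun j : Fin N => δ^[(j : ℕ)] f)).det = C (coeff t f) * E := by
        rw [hrow, Matrix.det_updateRow_sum, smul_eq_mul, ← hE]
        congr 2
        rw [hi0, Equiv.apply_symm_apply]
      have hdvd2 : f ∣ (M.updateRow i0 (fun j : Fin N => δ^[(j : ℕ)] f)).det := by
        rw [Matrix.det_apply]
        apply Finset.dvd_sum
        intro σp _
        have hmem : f ∣ (M.updateRow i0 (fun j : Fin N => δ^[(j : ℕ)] f)) (σp (σp⁻¹ i0)) (σp⁻¹ i0) := by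
          rw [Equiv.Perm.coe_inv, Equiv.apply_symm_apply, Matrix.updateRow_self]
          exact dvd_iterate_deriv δ f (hinv f hf) _
        have hpd : f ∣ ∏ j : Fin N, (M.updateRow i0 (fun j : Fin N => δ^[(j : ℕ)] f)) (σp j) j :=
          dvd_trans hmem (Finset.dvd_prod_of_mem _ (Finset.mem_univ (σp⁻¹ i0)))
        rcases Int.units_eq_one_or (Equiv.Perm.sign σp) with hs | hs <;> rw [hs]
        · simpa using hpd
        · have : (-1 : ℤˣ) • (∏ j : Fin N, (M.updateRow i0 (fun j : Fin N => δ^[(j : ℕ)] f)) (σp j) j)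
              = -(∏ j : Fin N, (M.updateRow i0 (fun j : Fin N => δ^[(j : ℕ)] f)) (σp j) j) := by simp
          rw [this]
          exact dvd_neg.mpr hpd
      rw [hdet] at hdvd2
      have hCunit : IsUnit (C (coeff t f) : MvPolynomial (Fin (n + 1)) ℂ) :=
        IsUnit.map (C : ℂ →+* MvPolynomial (Fin (n + 1)) ℂ) ht.isUnit
      exact hCunit.dvd_mul_left.mp hdvd2
    have hproddvd : ∀ T : Finset (MvPolynomial (Fin (n + 1)) ℂ), T ⊆ S → (∏ f ∈ T, f) ∣ E := by
      intro T
      induction T using Finset.induction_on with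
      | empty => intro _; simpa using one_dvd E
      | @insert g T hgT ih =>
        intro hsub
        have hgS : g ∈ S := hsub (Finset.mem_insert_self g T)
        have hTsub : T ⊆ S := fun x hx => hsub (Finset.mem_insert_of_mem hx)
        obtain ⟨E', hE'⟩ := ih hTsub
        have hprime : Prime g := (UniqueFactorizationMonoid.irreducible_iff_prime).mp (hirr g hgS)
        have hgE : g ∣ (∏ f ∈ T, f) * E' := by rw [← hE']; exact hfdvd g hgS
        rcases hprime.2.2 _ _ hgE with hcase | hcase
        · exfalso
          obtain ⟨fT, hfT, hgf⟩ := hprime.exists_mem_finset_dvd hcase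
          have hne : g ≠ fT := fun h => hgT (h ▸ hfT)
          exact hassoc g hgS fT (hTsub hfT) hne
            ((hirr g hgS).associated_of_dvd (hirr fT (hTsub hfT)) hgf)
        · obtain ⟨E'', hE''⟩ := hcase
          refine ⟨E'', ?_⟩
          rw [Finset.prod_insert hgT, hE', hE'']
          ring
    have hproddvdS := hproddvd S (subset_refl S)
    have hprodhom : (∏ f ∈ S, f).IsHomogeneous (S.card * k) := by
      have := IsHomogeneous.prod S (fun f => f) (fun _ => k) (fun f hf => hhom f hf)
      simpa using this
    obtain ⟨q, hq⟩ := hproddvdS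
    obtain ⟨t, ht⟩ : ∃ t, coeff t E ≠ 0 := by
      by_contra hco
      push_neg at hco
      exact hE0 (MvPolynomial.ext _ _ (fun t => by rw [hco t, coeff_zero]))
    have htdeg : Finsupp.degree t = Dg := by
      by_contra hne
      exact ht (hEhom.coeff_eq_zero hne)
    rw [hq, coeff_mul] at ht
    obtain ⟨x, hx, hxne⟩ := Finset.exists_ne_zero_of_sum_ne_zero ht
    have hx1 : coeff x.1 (∏ f ∈ S, f) ≠ 0 := fun h => hxne (by rw [h, zero_mul])
    have hx1deg : Finsupp.degree x.1 = S.card * k := by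
      by_contra hne
      exact hx1 (hprodhom.coeff_eq_zero hne)
    have hxsum : x.1 + x.2 = t := Finset.HasAntidiagonal.mem_antidiagonal.mp hx
    have hled : S.card * k ≤ Dg := by
      rw [← htdeg, ← hxsum, finsupp_degree_add, hx1deg]
      omega
    rw [hDg] at hled
    calc k * S.card = S.card * k := mul_comm _ _
      _ ≤ N * k + (d - 1) * N.choose 2 := hled
      _ = k * N + (d - 1) * N.choose 2 := by rw [mul_comm N k]
end

section
/- Let n ≥ 1, d ≥ 2, k ≥ 1, and let δ be a ℂ-derivation of ℂ[x₀,…,xₙ] = MvPolynomial (Fin (n+1)) ℂ such that δ(xᵢ) is homogeneous of degree d for every i. Suppose there exists a finite set S of pairwise non-associated irreducible homogeneous polynomials of degree k, each δ-invariant, with |S| > C(n+k,k) and k·(|S| − C(n+k,k)) > (d−1)·C(C(n+k,k), 2). Then δ admits a rational first integral: there exist polynomials u, v, linearly independent over ℂ, with v·δ(u) = u·δ(v). -/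
namespace Cor3Aux

variable {K : Type*} [Field K]

/-- If the Wronskian-type determinant of a family vanishes, the family is linearly
dependent over the constants of `D`. -/
theorem wronskian_eq_zero_dep (D : K → K)
    (hadd : ∀ a b : K, D (a + b) = D a + D b)
    (hmul : ∀ a b : K, D (a * b) = a * D b + b * D a) :
    ∀ (m : ℕ) (u : Fin m → K),
      (Matrix.of fun i j : Fin m => D^[(i : ℕ)] (u j)).det = 0 →
      ∃ c : Fin m → K, (∀ j, D (c j) = 0) ∧ (∃ j, c j ≠ 0) ∧ ∑ j, c j * u j = 0 := by
  classical
  have hzero : D 0 = 0 := by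
    have h00 : D 0 + 0 = D 0 + D 0 := by
      have := hadd 0 0; simpa using this
    exact (add_left_cancel h00).symm
  have hone : D 1 = 0 := by
    have h11 : D 1 + 0 = D 1 + D 1 := by
      have := hmul 1 1; simpa using this
    exact (add_left_cancel h11).symm
  have hsum : ∀ {ι : Type} (s : Finset ι) (g : ι → K),
      D (∑ x ∈ s, g x) = ∑ x ∈ s, D (g x) := by
    intro ι s g
    induction s using Finset.cons_induction with
    | empty => simpa using hzero
    | cons a s ha ih => rw [Finset.sum_cons, hadd, ih, Finset.sum_cons]
  intro m
  induction m with
  | zero =>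
    intro u h
    rw [Matrix.det_fin_zero] at h
    exact absurd h one_ne_zero
  | succ m ih =>
    intro u h
    set W' : Matrix (Fin m) (Fin m) K :=
      Matrix.of (fun i j : Fin m => D^[(i : ℕ)] (u j.castSucc)) with hW'
    by_cases hdet : W'.det = 0
    · obtain ⟨c', hc1, ⟨j0, hj0⟩, hc3⟩ := ih (fun j => u j.castSucc) hdet
      refine ⟨Fin.snoc c' 0, ?_, ⟨j0.castSucc, by simpa using hj0⟩, ?_⟩
      · intro j
        refine Fin.lastCases ?_ (fun i => ?_) j
        · simpa using hzero
        · simpa using hc1 i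
      · rw [Fin.sum_univ_castSucc]
        simpa using hc3
    · -- main case: the leading principal Wronskian is nonzero
      obtain ⟨a, ha0, haW⟩ := (Matrix.exists_mulVec_eq_zero_iff).2 h
      -- a (Fin.last m) ≠ 0, else contradiction with hdet
      have hlast : a (Fin.last m) ≠ 0 := by
        intro hl
        apply hdet
        rw [← Matrix.exists_mulVec_eq_zero_iff]
        refine ⟨fun j => a j.castSucc, ?_, ?_⟩
        · intro h0
          apply ha0
          funext j
          refine Fin.lastCases hl (fun i => ?_) j
          exact congrFun h0 i
        · funext i
          have hthis := congrFun haW i.castSucc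
          simp only [Matrix.mulVec, dotProduct, Matrix.of_apply, Pi.zero_apply] at hthis ⊢
          rw [Fin.sum_univ_castSucc, hl, mul_zero, add_zero] at hthis
          simpa [hW'] using hthis
      -- normalize
      set b : Fin (m + 1) → K := fun j => a j * (a (Fin.last m))⁻¹ with hb
      have hblast : b (Fin.last m) = 1 := by
        simp [hb, mul_inv_cancel₀ hlast]
      have hEq : ∀ i : Fin (m + 1), ∑ j, D^[(i : ℕ)] (u j) * b j = 0 := by
        intro i
        have := congrFun haW i
        simp only [Matrix.mulVec, dotProduct, Matrix.of_apply, Pi.zero_apply] at this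
        calc ∑ j, D^[(i : ℕ)] (u j) * b j
            = (∑ j, D^[(i : ℕ)] (u j) * a j) * (a (Fin.last m))⁻¹ := by
              rw [Finset.sum_mul]; congr 1; funext j; ring
          _ = 0 := by rw [this, zero_mul]
      -- differentiate the equations
      have hDb : ∀ i : Fin m, ∑ j, D^[(i : ℕ)] (u j) * D (b j) = 0 := by
        intro i
        have hcs : ((i.castSucc : Fin (m + 1)) : ℕ) = (i : ℕ) := rfl
        have hsc : ((i.succ : Fin (m + 1)) : ℕ) = (i : ℕ) + 1 := rfl
        have h1 := hEq i.castSucc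
        have h2 := hEq i.succ
        rw [hcs] at h1
        rw [hsc] at h2
        have h3 : D (∑ j, D^[(i : ℕ)] (u j) * b j) = 0 := by rw [h1, hzero]
        rw [hsum] at h3
        have h4 : ∀ j, D (D^[(i : ℕ)] (u j) * b j) =
            D^[(i : ℕ) + 1] (u j) * b j + D^[(i : ℕ)] (u j) * D (b j) := by
          intro j
          rw [hmul, Function.iterate_succ_apply']
          ring
        simp only [h4, Finset.sum_add_distrib] at h3
        rw [h2, zero_add] at h3
        exact h3
      -- constants
      have hconst : ∀ j, D (b j) = 0 := by
        have hvec : W'.mulVec (fun j : Fin m => D (b j.castSucc)) = 0 := by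
          funext i
          have := hDb i
          rw [Fin.sum_univ_castSucc] at this
          have hbl : D (b (Fin.last m)) = 0 := by rw [hblast]; exact hone
          rw [hbl, mul_zero, add_zero] at this
          simpa [Matrix.mulVec, dotProduct, hW'] using this
        have hzero' : (fun j : Fin m => D (b j.castSucc)) = 0 := by
          by_contra hne
          exact hdet ((Matrix.exists_mulVec_eq_zero_iff).1 ⟨_, hne, hvec⟩)
        intro j
        refine Fin.lastCases ?_ (fun i => ?_) j
        · rw [hblast]; exact hone
        · exact congrFun hzero' i
      refine ⟨b, hconst, ⟨Fin.last m, by rw [hblast]; exact one_ne_zero⟩, ?_⟩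
      have := hEq 0
      simpa [mul_comm] using this


variable {R : Type*} [CommRing R] [IsDomain R] [Algebra ℂ R]

/-- The extension of a derivation to the fraction field, as a bare function. -/
noncomputable def Dfun (δ : Derivation ℂ R R) (z : FractionRing R) : FractionRing R :=
  let s := IsLocalization.sec (nonZeroDivisors R) z
  (algebraMap R (FractionRing R) (δ s.1) * algebraMap R (FractionRing R) (s.2 : R)
    - algebraMap R (FractionRing R) s.1 * algebraMap R (FractionRing R) (δ (s.2 : R))) /
    (algebraMap R (FractionRing R) (s.2 : R)) ^ 2

variable (δ : Derivation ℂ R R)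

theorem Dfun_spec (z : FractionRing R) (p q : R) (hq : q ≠ 0)
    (hz : z * algebraMap R (FractionRing R) q = algebraMap R (FractionRing R) p) :
    Dfun δ z = (algebraMap R (FractionRing R) (δ p) * algebraMap R (FractionRing R) q
      - algebraMap R (FractionRing R) p * algebraMap R (FractionRing R) (δ q)) /
      (algebraMap R (FractionRing R) q) ^ 2 := by
  set A := algebraMap R (FractionRing R) with hA
  have hAinj : Function.Injective A := IsFractionRing.injective R (FractionRing R)
  have hAne : ∀ x : R, x ≠ 0 → A x ≠ 0 := by
    intro x hx h0
    exact hx (hAinj (by rw [h0, map_zero]))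
  set s := IsLocalization.sec (nonZeroDivisors R) z with hs
  have hq0 : (s.2 : R) ≠ 0 := nonZeroDivisors.ne_zero s.2.2
  have hspec : z * A (s.2 : R) = A s.1 := IsLocalization.sec_spec (nonZeroDivisors R) z
  -- cross relation
  have hcross : p * (s.2 : R) = s.1 * q := by
    apply hAinj
    rw [map_mul, map_mul, ← hz, ← hspec]
    ring
  have hder : δ p * (s.2 : R) + p * δ (s.2 : R) = δ s.1 * q + s.1 * δ q := by
    have := congrArg δ hcross
    simpa [Derivation.leibniz, smul_eq_mul, mul_comm, add_comm] using this
  show (A (δ s.1) * A (s.2 : R) - A s.1 * A (δ (s.2 : R))) / (A (s.2 : R)) ^ 2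
      = (A (δ p) * A q - A p * A (δ q)) / (A q) ^ 2
  rw [div_eq_div_iff (pow_ne_zero _ (hAne _ hq0)) (pow_ne_zero _ (hAne _ hq))]
  have : ((δ s.1) * (s.2 : R) - s.1 * (δ (s.2 : R))) * q ^ 2
      = ((δ p) * q - p * (δ q)) * (s.2 : R) ^ 2 := by
    linear_combination (-(q * (s.2 : R))) * hder + (q * δ (s.2 : R) + (s.2 : R) * δ q) * hcross
  calc (A (δ s.1) * A (s.2 : R) - A s.1 * A (δ (s.2 : R))) * A q ^ 2
      = A (((δ s.1) * (s.2 : R) - s.1 * (δ (s.2 : R))) * q ^ 2) := by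
        rw [map_mul, map_sub, map_pow, map_mul, map_mul]
    _ = A (((δ p) * q - p * (δ q)) * (s.2 : R) ^ 2) := by rw [this]
    _ = (A (δ p) * A q - A p * A (δ q)) * A (s.2 : R) ^ 2 := by
        rw [map_mul, map_sub, map_pow, map_mul, map_mul]

theorem Dfun_algebraMap (r : R) :
    Dfun δ (algebraMap R (FractionRing R) r) = algebraMap R (FractionRing R) (δ r) := by
  rw [Dfun_spec δ _ r 1 one_ne_zero (by rw [map_one, mul_one])]
  simp

theorem Dfun_add (z w : FractionRing R) : Dfun δ (z + w) = Dfun δ z + Dfun δ w := by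
  set A := algebraMap R (FractionRing R) with hA
  have hAinj : Function.Injective A := IsFractionRing.injective R (FractionRing R)
  have hAne : ∀ x : R, x ≠ 0 → A x ≠ 0 := by
    intro x hx h0
    exact hx (hAinj (by rw [h0, map_zero]))
  set sz := IsLocalization.sec (nonZeroDivisors R) z with hsz
  set sw := IsLocalization.sec (nonZeroDivisors R) w with hsw
  have hqz : (sz.2 : R) ≠ 0 := nonZeroDivisors.ne_zero sz.2.2
  have hqw : (sw.2 : R) ≠ 0 := nonZeroDivisors.ne_zero sw.2.2
  have hz : z * A (sz.2 : R) = A sz.1 := IsLocalization.sec_spec (nonZeroDivisors R) z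
  have hw : w * A (sw.2 : R) = A sw.1 := IsLocalization.sec_spec (nonZeroDivisors R) w
  have hzw : (z + w) * A ((sz.2 : R) * (sw.2 : R))
      = A (sz.1 * (sw.2 : R) + sw.1 * (sz.2 : R)) := by
    rw [map_mul, map_add, map_mul, map_mul, ← hz, ← hw]
    ring
  have hAz : A (sz.2 : R) ≠ 0 := hAne _ hqz
  have hAw : A (sw.2 : R) ≠ 0 := hAne _ hqw
  rw [Dfun_spec δ (z + w) _ _ (mul_ne_zero hqz hqw) hzw,
    Dfun_spec δ z sz.1 (sz.2 : R) hqz hz, Dfun_spec δ w sw.1 (sw.2 : R) hqw hw]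
  simp only [Derivation.leibniz, Derivation.map_add, smul_eq_mul, map_add, map_mul]
  field_simp
  ring

theorem Dfun_mul (z w : FractionRing R) :
    Dfun δ (z * w) = z * Dfun δ w + w * Dfun δ z := by
  set A := algebraMap R (FractionRing R) with hA
  have hAinj : Function.Injective A := IsFractionRing.injective R (FractionRing R)
  have hAne : ∀ x : R, x ≠ 0 → A x ≠ 0 := by
    intro x hx h0
    exact hx (hAinj (by rw [h0, map_zero]))
  set sz := IsLocalization.sec (nonZeroDivisors R) z with hsz
  set sw := IsLocalization.sec (nonZeroDivisors R) w with hsw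
  have hqz : (sz.2 : R) ≠ 0 := nonZeroDivisors.ne_zero sz.2.2
  have hqw : (sw.2 : R) ≠ 0 := nonZeroDivisors.ne_zero sw.2.2
  have hz : z * A (sz.2 : R) = A sz.1 := IsLocalization.sec_spec (nonZeroDivisors R) z
  have hw : w * A (sw.2 : R) = A sw.1 := IsLocalization.sec_spec (nonZeroDivisors R) w
  have hzw : (z * w) * A ((sz.2 : R) * (sw.2 : R)) = A (sz.1 * sw.1) := by
    rw [map_mul, map_mul, ← hz, ← hw]
    ring
  have hzval : z = A sz.1 / A (sz.2 : R) := by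
    rw [eq_div_iff (hAne _ hqz)]; exact hz
  have hwval : w = A sw.1 / A (sw.2 : R) := by
    rw [eq_div_iff (hAne _ hqw)]; exact hw
  have hAz : A (sz.2 : R) ≠ 0 := hAne _ hqz
  have hAw : A (sw.2 : R) ≠ 0 := hAne _ hqw
  rw [Dfun_spec δ (z * w) _ _ (mul_ne_zero hqz hqw) hzw,
    Dfun_spec δ z sz.1 (sz.2 : R) hqz hz, Dfun_spec δ w sw.1 (sw.2 : R) hqw hw,
    hzval, hwval]
  simp only [Derivation.leibniz, smul_eq_mul, map_add, map_mul]
  field_simp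
  ring


open MvPolynomial

lemma Finsupp.degree_add' {σ : Type*} (x y : σ →₀ ℕ) :
    (x + y).degree = x.degree + y.degree := by
  classical
  simp only [Finsupp.degree_eq_weight_one, map_add]

lemma Finsupp.degree_single_one {σ : Type*} (i : σ) :
    (Finsupp.single i (1 : ℕ)).degree = 1 := by
  classical
  rw [Finsupp.degree_apply, Finsupp.support_single_ne_zero _ one_ne_zero, Finset.sum_singleton,
    Finsupp.single_eq_same]

lemma isHomogeneous_derivation {σ : Type*} [DecidableEq σ]
    (δ : Derivation ℂ (MvPolynomial σ ℂ) (MvPolynomial σ ℂ)) (d : ℕ) (hd : 1 ≤ d)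
    (hδ : ∀ i, (δ (X i)).IsHomogeneous d) {f : MvPolynomial σ ℂ} {a : ℕ}
    (hf : f.IsHomogeneous a) : (δ f).IsHomogeneous (a + (d - 1)) := by
  have hrepr : δ = mkDerivation ℂ fun i => δ (X i) :=
    derivation_ext fun i => by rw [mkDerivation_X]
  have hsum : δ f = ∑ v ∈ f.support, δ (monomial v (coeff v f)) := by
    conv_lhs => rw [f.as_sum]
    exact map_sum δ.toLinearMap _ _
  rw [hsum]
  apply MvPolynomial.IsHomogeneous.sum
  intro v hv
  have hva : v.degree = a := by
    by_contra hne
    exact (mem_support_iff.1 hv) (hf.coeff_eq_zero hne)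
  rw [hrepr, mkDerivation_monomial, smul_eq_C_mul]
  apply MvPolynomial.IsHomogeneous.C_mul
  rw [Finsupp.sum]
  apply MvPolynomial.IsHomogeneous.sum
  intro i hi
  rw [smul_eq_mul]
  have hvi : 1 ≤ v i := Nat.one_le_iff_ne_zero.2 (Finsupp.mem_support_iff.1 hi)
  have ha1 : 1 ≤ a := by
    calc 1 ≤ v i := hvi
    _ ≤ v.degree := Finsupp.le_degree i v
    _ = a := hva
  have hdeg : (v - Finsupp.single i 1).degree = a - 1 := by
    have hle : Finsupp.single i 1 ≤ v := by
      rw [Finsupp.single_le_iff]; exact hvi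
    have hcancel : (v - Finsupp.single i 1) + Finsupp.single i 1 = v :=
      tsub_add_cancel_of_le hle
    have := congrArg Finsupp.degree hcancel
    rw [Finsupp.degree_add', Finsupp.degree_single_one, hva] at this
    omega
  have : (a - 1) + d = a + (d - 1) := by omega
  rw [← this]
  exact (isHomogeneous_monomial _ hdeg).mul (hδ i)


open MvPolynomial

section Monomials

variable (n k : ℕ)

lemma card_sym_monomials :
    Fintype.card (Sym (Fin (n + 1)) k) = (n + k).choose k := by
  rw [Sym.card_sym_eq_choose]
  congr 1
  rw [Fintype.card_fin]
  omega

/-- The exponent finsupp attached to an element of `Sym (Fin (n+1)) k`. -/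
noncomputable def expFin (j : Sym (Fin (n + 1)) k) : Fin (n + 1) →₀ ℕ :=
  Multiset.toFinsupp (j : Multiset (Fin (n + 1)))

lemma expFin_degree (j : Sym (Fin (n + 1)) k) : (expFin n k j).degree = k := by
  have h1 : (expFin n k j).sum (fun _ => id) = Multiset.card (j : Multiset (Fin (n + 1))) :=
    Multiset.toFinsupp_sum_eq _
  have h2 : Multiset.card (j : Multiset (Fin (n + 1))) = k := j.2
  have h3 : (expFin n k j).degree = (expFin n k j).sum fun _ => id := rfl
  rw [h3, h1, h2]

lemma expFin_injective : Function.Injective (expFin n k) := by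
  intro a b hab
  have := Multiset.toFinsupp.injective hab
  exact Subtype.ext this

lemma expFin_surjective {σ : Fin (n + 1) →₀ ℕ} (hσ : σ.degree = k) :
    ∃ j, expFin n k j = σ := by
  classical
  have hc : Multiset.card (Finsupp.toMultiset σ) = k := by
    rw [Finsupp.card_toMultiset]
    rw [← hσ]
    rfl
  refine ⟨⟨Finsupp.toMultiset σ, hc⟩, ?_⟩
  simp [expFin, Multiset.toFinsupp_toMultiset]

lemma repr_homog (f : MvPolynomial (Fin (n + 1)) ℂ) (hf : f.IsHomogeneous k) :
    f = ∑ j : Sym (Fin (n + 1)) k,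
      C (coeff (expFin n k j) f) * monomial (expFin n k j) 1 := by
  classical
  apply MvPolynomial.ext
  intro τ
  rw [MvPolynomial.coeff_sum]
  have hterm : ∀ j, coeff τ (C (coeff (expFin n k j) f) * monomial (expFin n k j) 1)
      = coeff (expFin n k j) f * (if expFin n k j = τ then 1 else 0) := by
    intro j
    rw [coeff_C_mul, coeff_monomial]
  simp only [hterm]
  by_cases hτ : τ.degree = k
  · obtain ⟨j₀, hj₀⟩ := expFin_surjective n k hτ
    have h1 : (∑ x : Sym (Fin (n + 1)) k,
        coeff (expFin n k x) f * if expFin n k x = τ then 1 else 0)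
        = coeff (expFin n k j₀) f * (if expFin n k j₀ = τ then 1 else 0) :=
      Finset.sum_eq_single_of_mem j₀ (Finset.mem_univ j₀)
        (fun j _ hj => by
          rw [if_neg (fun h => hj (expFin_injective n k (h.trans hj₀.symm))), mul_zero])
    rw [h1, hj₀, if_pos rfl, mul_one]
  · rw [hf.coeff_eq_zero hτ]
    refine (Finset.sum_eq_zero ?_).symm
    intro j _
    rw [if_neg, mul_zero]
    intro h
    exact hτ (h ▸ expFin_degree n k j)

end Monomials

section DetLemmas

variable {σ : Type*} [DecidableEq σ] (δ : Derivation ℂ (MvPolynomial σ ℂ) (MvPolynomial σ ℂ))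

lemma iterate_sum_repr {ι : Type*} [Fintype ι] (m : ι → MvPolynomial σ ℂ) (c : ι → ℂ)
    (f : MvPolynomial σ ℂ) (hrep : f = ∑ j, C (c j) * m j) (i : ℕ) :
    (⇑δ)^[i] f = ∑ j, C (c j) * (⇑δ)^[i] (m j) := by
  induction i with
  | zero => simpa using hrep
  | succ i ih =>
    rw [Function.iterate_succ_apply', ih]
    have h1 : δ (∑ j, C (c j) * (⇑δ)^[i] (m j)) = ∑ j, δ (C (c j) * (⇑δ)^[i] (m j)) :=
      map_sum δ.toLinearMap _ _
    rw [h1]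
    apply Finset.sum_congr rfl
    intro j _
    rw [← smul_eq_C_mul, Derivation.map_smul, smul_eq_C_mul, Function.iterate_succ_apply']

lemma dvd_iterate (f : MvPolynomial σ ℂ) (hf : f ∣ δ f) (i : ℕ) : f ∣ (⇑δ)^[i] f := by
  induction i with
  | zero => exact dvd_refl f
  | succ i ih =>
    rw [Function.iterate_succ_apply']
    obtain ⟨w, hw⟩ := ih
    rw [hw, Derivation.leibniz, smul_eq_mul, smul_eq_mul]
    exact dvd_add (dvd_mul_right f (δ w)) (hf.mul_left w)

lemma dvd_wronskian_det {ι : Type*} [Fintype ι] [DecidableEq ι]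
    (m : ι → MvPolynomial σ ℂ) (ord : ι → ℕ) (c : ι → ℂ) (f : MvPolynomial σ ℂ)
    (hrep : f = ∑ j, C (c j) * m j) (hinvf : f ∣ δ f) (j₀ : ι) (hj₀ : c j₀ ≠ 0) :
    f ∣ (Matrix.of fun j i : ι => (⇑δ)^[ord i] (m j)).det := by
  classical
  set W : Matrix ι ι (MvPolynomial σ ℂ) := Matrix.of fun j i : ι => (⇑δ)^[ord i] (m j) with hW
  have hdvd : ∀ i : ℕ, f ∣ (⇑δ)^[i] f := dvd_iterate δ f hinvf
  choose g hg using hdvd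
  have hrow : (∑ jj, (C (c jj) : MvPolynomial σ ℂ) • W jj) = f • fun i => g (ord i) := by
    funext i
    show (∑ jj, (C (c jj) : MvPolynomial σ ℂ) • W jj) i = f * g (ord i)
    rw [Finset.sum_apply]
    have heach : ∀ jj, ((C (c jj) : MvPolynomial σ ℂ) • W jj) i
        = C (c jj) * (⇑δ)^[ord i] (m jj) := fun jj => rfl
    rw [Finset.sum_congr rfl (fun jj _ => heach jj),
      ← iterate_sum_repr δ m c f hrep (ord i), hg (ord i)]
  have h1 : (W.updateRow j₀ (∑ jj, (C (c jj) : MvPolynomial σ ℂ) • W jj)).det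
      = C (c j₀) • W.det := Matrix.det_updateRow_sum W j₀ (fun jj => C (c jj))
  rw [hrow, Matrix.det_updateRow_smul] at h1
  have hunit : IsUnit (C (c j₀) : MvPolynomial σ ℂ) :=
    (isUnit_iff_ne_zero.2 hj₀).map (C : ℂ →+* MvPolynomial σ ℂ)
  have : f ∣ (C (c j₀) : MvPolynomial σ ℂ) • W.det := by
    rw [← h1]
    exact Dvd.intro _ rfl
  rw [smul_eq_mul] at this
  exact (hunit.dvd_mul_left).1 this

end DetLemmas


open MvPolynomial

lemma zsmul_isHomogeneous {σ : Type*} (u : ℤˣ) {p : MvPolynomial σ ℂ} {a : ℕ}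
    (hp : p.IsHomogeneous a) : (u • p).IsHomogeneous a := by
  rcases Int.units_eq_one_or u with h | h <;> subst h
  · simpa using hp
  · have : ((-1 : ℤˣ) • p) = -p := by
      simp [Units.smul_def]
    rw [this]
    exact hp.neg

lemma det_isHomogeneous {σ : Type*} {ι : Type*} [Fintype ι] [DecidableEq ι]
    (M : Matrix ι ι (MvPolynomial σ ℂ)) (w : ι → ℕ)
    (hM : ∀ i j, (M i j).IsHomogeneous (w j)) :
    M.det.IsHomogeneous (∑ j, w j) := by
  rw [Matrix.det_apply]
  apply MvPolynomial.IsHomogeneous.sum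
  intro p _
  apply zsmul_isHomogeneous
  have : ∀ j (_ : j ∈ (Finset.univ : Finset ι)), (M (p j) j).IsHomogeneous (w j) :=
    fun j _ => hM (p j) j
  exact MvPolynomial.IsHomogeneous.prod _ _ _ this

lemma degree_le_of_dvd_homog {σ : Type*} {p e : MvPolynomial σ ℂ} {a b : ℕ}
    (hp : p.IsHomogeneous a) (he : e.IsHomogeneous b) (hne : e ≠ 0) (hdvd : p ∣ e) :
    a ≤ b := by
  classical
  obtain ⟨w, rfl⟩ := hdvd
  have hp0 : p ≠ 0 := fun h => hne (by rw [h, zero_mul])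
  have hw0 : w ≠ 0 := fun h => hne (by rw [h, mul_zero])
  set c := w.totalDegree with hc
  -- top homogeneous component of w is nonzero
  have hsupp : w.support.Nonempty := by
    rw [MvPolynomial.support_nonempty]
    exact hw0
  obtain ⟨τ, hτmem, hτ⟩ := Finset.exists_mem_eq_sup w.support hsupp
    (fun s => s.sum fun _ e => e)
  have hwc : homogeneousComponent c w ≠ 0 := by
    intro h0
    have := coeff_homogeneousComponent (σ := σ) (R := ℂ) c w τ
    rw [h0] at this
    simp only [coeff_zero] at this
    rw [if_pos] at this
    · exact (mem_support_iff.1 hτmem) this.symm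
    · show τ.degree = c
      have h4 : w.totalDegree = τ.sum fun _ e => e := hτ
      rw [hc, h4]
      rfl
  -- e decomposes
  have hdecomp : p * w = ∑ i ∈ Finset.range (c + 1), p * homogeneousComponent i w := by
    rw [← Finset.mul_sum]
    congr 1
    exact (sum_homogeneousComponent w).symm
  have hcomp : homogeneousComponent (a + c) (p * w) = p * homogeneousComponent c w := by
    rw [hdecomp, map_sum]
    rw [Finset.sum_eq_single_of_mem c (Finset.self_mem_range_succ c)]
    · have hmem : p * homogeneousComponent c w ∈ homogeneousSubmodule σ ℂ (a + c) :=
        (mem_homogeneousSubmodule _ _).2 (hp.mul (homogeneousComponent_isHomogeneous c w))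
      rw [homogeneousComponent_of_mem hmem, if_pos rfl]
    · intro i _ hic
      have hmem : p * homogeneousComponent i w ∈ homogeneousSubmodule σ ℂ (a + i) :=
        (mem_homogeneousSubmodule _ _).2 (hp.mul (homogeneousComponent_isHomogeneous i w))
      rw [homogeneousComponent_of_mem hmem, if_neg (by omega)]
  by_contra hab
  push_neg at hab
  -- then a + c ≠ b, so the component vanishes, contradiction
  have hz : homogeneousComponent (a + c) (p * w) = 0 := by
    have hmem : p * w ∈ homogeneousSubmodule σ ℂ b := (mem_homogeneousSubmodule _ _).2 he
    rw [homogeneousComponent_of_mem hmem, if_neg (by omega)]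
  rw [hcomp] at hz
  exact (mul_ne_zero hp0 hwc) hz

lemma prod_finset_dvd {R : Type*} [CommRing R] [IsDomain R] [UniqueFactorizationMonoid R]
    (S : Finset R) (E : R)
    (hirr : ∀ f ∈ S, Irreducible f)
    (hassoc : ∀ f ∈ S, ∀ g ∈ S, f ≠ g → ¬ Associated f g)
    (hdvd : ∀ f ∈ S, f ∣ E) : (∏ f ∈ S, f) ∣ E := by
  classical
  have := Multiset.prod_primes_dvd (s := S.val) E
    (fun a ha => (UniqueFactorizationMonoid.irreducible_iff_prime).1 (hirr a ha))
    (fun a ha => hdvd a ha)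
    (fun a => by
      rw [Multiset.countP_eq_card_filter, ← Finset.filter_val]
      by_contra hle
      push_neg at hle
      have h2 : 1 < (S.filter (fun b => Associated a b)).card := hle
      obtain ⟨x, hx, y, hy, hxy⟩ := Finset.one_lt_card.1 h2
      obtain ⟨hxS, hax⟩ := Finset.mem_filter.1 hx
      obtain ⟨hyS, hay⟩ := Finset.mem_filter.1 hy
      exact hassoc x hxS y hyS hxy (hax.symm.trans hay))
  simpa using this

lemma sum_range_id_choose (N : ℕ) : ∑ i ∈ Finset.range N, i = N.choose 2 := by
  induction N with
  | zero => simp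
  | succ N ih =>
    rw [Finset.sum_range_succ, ih]
    have : (N + 1).choose 2 = N.choose 1 + N.choose 2 := Nat.choose_succ_succ N 1
    rw [this, Nat.choose_one_right]
    omega

end Cor3Aux
namespace Cor3Aux

open MvPolynomial

section Assembly

variable {σ : Type*} [DecidableEq σ] (δ : Derivation ℂ (MvPolynomial σ ℂ) (MvPolynomial σ ℂ))

lemma iterate_isHomogeneous (d : ℕ) (hd : 1 ≤ d)
    (hδ : ∀ i, (δ (X i)).IsHomogeneous d) {f : MvPolynomial σ ℂ} {a : ℕ}
    (hf : f.IsHomogeneous a) (i : ℕ) :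
    ((⇑δ)^[i] f).IsHomogeneous (a + i * (d - 1)) := by
  induction i with
  | zero => simpa using hf
  | succ i ih =>
    rw [Function.iterate_succ_apply']
    have h1 := isHomogeneous_derivation δ d hd hδ ih
    have h2 : (a + i * (d - 1)) + (d - 1) = a + (i + 1) * (d - 1) := by ring
    rwa [h2] at h1

lemma iterate_Dfun_algebraMap {R : Type*} [CommRing R] [IsDomain R] [Algebra ℂ R]
    (δ' : Derivation ℂ R R) (x : R) (i : ℕ) :
    (Dfun δ')^[i] (algebraMap R (FractionRing R) x)
      = algebraMap R (FractionRing R) ((⇑δ')^[i] x) := by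
  induction i generalizing x with
  | zero => rfl
  | succ i ih =>
    rw [Function.iterate_succ_apply, Function.iterate_succ_apply, Dfun_algebraMap, ih]

end Assembly

open MvPolynomial

/-- From a vanishing Wronskian determinant of a ℂ-linearly independent family,
produce a rational first integral. -/
lemma first_integral_of_wronskian_zero {R : Type*} [CommRing R] [IsDomain R] [Algebra ℂ R]
    (δ : Derivation ℂ R R) {N : ℕ} (v : Fin N → R)
    (hli : LinearIndependent ℂ v)
    (hdet : (Matrix.of fun i j : Fin N => (⇑δ)^[(i : ℕ)] (v j)).det = 0) :
    ∃ u w : R, LinearIndependent ℂ ![u, w] ∧ w * δ u = u * δ w := by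
  classical
  have hAinj : Function.Injective (algebraMap R (FractionRing R)) :=
    IsFractionRing.injective R (FractionRing R)
  have hAne : ∀ x : R, x ≠ 0 → algebraMap R (FractionRing R) x ≠ 0 := by
    intro x hx h0
    exact hx (hAinj (by rw [h0, map_zero]))
  have hKdet : (Matrix.of fun i j : Fin N =>
      (Dfun δ)^[(i : ℕ)] (algebraMap R (FractionRing R) (v j))).det = 0 := by
    have hKW : (Matrix.of fun i j : Fin N =>
        (Dfun δ)^[(i : ℕ)] (algebraMap R (FractionRing R) (v j)))
        = (Matrix.of fun i j : Fin N => (⇑δ)^[(i : ℕ)] (v j)).map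
            (algebraMap R (FractionRing R)) := by
      funext i j
      exact iterate_Dfun_algebraMap δ (v j) (i : ℕ)
    rw [hKW]
    have hmapdet : ((Matrix.of fun i j : Fin N => (⇑δ)^[(i : ℕ)] (v j)).map
        (algebraMap R (FractionRing R))).det
        = algebraMap R (FractionRing R)
            ((Matrix.of fun i j : Fin N => (⇑δ)^[(i : ℕ)] (v j)).det) :=
      (RingHom.map_det (algebraMap R (FractionRing R)) _).symm
    rw [hmapdet, hdet, map_zero]
  obtain ⟨c, hcconst, ⟨j1, hj1⟩, hcsum⟩ :=
    wronskian_eq_zero_dep (Dfun δ) (Dfun_add δ) (Dfun_mul δ) N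
      (fun j => algebraMap R (FractionRing R) (v j)) hKdet
  -- some constant is not (the image of) a complex number
  have hnotC : ∃ j, ¬ ∃ γ : ℂ, c j = algebraMap R (FractionRing R) (algebraMap ℂ R γ) := by
    by_contra hall
    push_neg at hall
    choose γ hγ using hall
    have hz : algebraMap R (FractionRing R) (∑ j, algebraMap ℂ R (γ j) * v j) = 0 := by
      rw [map_sum, ← hcsum]
      apply Finset.sum_congr rfl
      intro j _
      rw [map_mul, ← hγ j]
    have hz2 : (∑ j, algebraMap ℂ R (γ j) * v j) = 0 := hAinj (by rw [hz, map_zero])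
    have hz3 : (∑ j, γ j • v j) = 0 := by
      rw [← hz2]
      apply Finset.sum_congr rfl
      intro j _
      rw [Algebra.smul_def]
    have hγ0 := Fintype.linearIndependent_iff.1 hli γ hz3
    apply hj1
    rw [hγ j1, hγ0 j1, map_zero, map_zero]
  obtain ⟨js, hjs⟩ := hnotC
  obtain ⟨⟨p, q⟩, hpq⟩ := IsLocalization.surj (nonZeroDivisors R) (c js)
  have hq0 : (q : R) ≠ 0 := nonZeroDivisors.ne_zero q.2
  have hspec := Dfun_spec δ (c js) p (q : R) hq0 hpq
  rw [hcconst js] at hspec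
  have hnum : algebraMap R (FractionRing R) (δ p) * algebraMap R (FractionRing R) (q : R)
      - algebraMap R (FractionRing R) p * algebraMap R (FractionRing R) (δ (q : R)) = 0 := by
    have h4 := hspec.symm
    rw [div_eq_zero_iff] at h4
    rcases h4 with h4 | h4
    · exact h4
    · exact absurd h4 (pow_ne_zero _ (hAne _ hq0))
  have hfinal : (q : R) * δ p = p * δ (q : R) := by
    apply hAinj
    rw [map_mul, map_mul]
    have h6 : algebraMap R (FractionRing R) (δ p) * algebraMap R (FractionRing R) (q : R)
        = algebraMap R (FractionRing R) p * algebraMap R (FractionRing R) (δ (q : R)) :=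
      sub_eq_zero.1 hnum
    rw [mul_comm (algebraMap R (FractionRing R) (q : R)) (algebraMap R (FractionRing R) (δ p))]
    exact h6
  have hnotmul : ∀ γ : ℂ, p ≠ algebraMap ℂ R γ * (q : R) := by
    intro γ hpγ
    apply hjs
    refine ⟨γ, ?_⟩
    have h7 : (c js) * algebraMap R (FractionRing R) (q : R)
        = algebraMap R (FractionRing R) (algebraMap ℂ R γ)
          * algebraMap R (FractionRing R) (q : R) := by
      rw [hpq, hpγ, map_mul]
    exact mul_right_cancel₀ (hAne _ hq0) h7
  have hli2 : LinearIndependent ℂ ![p, (q : R)] := by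
    rw [LinearIndependent.pair_iff]
    intro s t hst
    by_cases hs : s = 0
    · subst hs
      rw [zero_smul, zero_add] at hst
      have ht : t = 0 := by
        by_contra ht0
        exact hq0 ((smul_eq_zero.1 hst).resolve_left ht0)
      exact ⟨rfl, ht⟩
    · exfalso
      apply hnotmul (-t / s)
      have h8 : p = (s⁻¹ * (-t)) • (q : R) := by
        have h5 : s • p = (-t) • (q : R) := by
          rw [← sub_eq_zero, sub_eq_add_neg, ← neg_smul, neg_neg]
          exact hst
        have := congrArg (fun x => s⁻¹ • x) h5
        simpa [smul_smul, inv_mul_cancel₀ hs] using this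
      rw [h8, Algebra.smul_def]
      congr 1
      rw [div_eq_mul_inv]
      ring
  exact ⟨p, (q : R), hli2, hfinal⟩

end Cor3Aux
open MvPolynomial Cor3Aux

/-- Corollary 3 of the paper: if a degree-`d` foliation `δ` on `ℙⁿ` has a set `S` of
pairwise non-associated irreducible homogeneous invariant polynomials of degree `k` with
`|S| > C(n+k,k)` and `k * (|S| - C(n+k,k)) > (d-1) * C(C(n+k,k), 2)`, then `δ` admits a
rational first integral. -/
theorem rational_first_integral_of_many_invariant_hypersurfaces (n d k : ℕ)
    (hn : 1 ≤ n) (hd : 2 ≤ d) (hk : 1 ≤ k)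
    (δ : Derivation ℂ (MvPolynomial (Fin (n + 1)) ℂ) (MvPolynomial (Fin (n + 1)) ℂ))
    (hδ : ∀ i, (δ (MvPolynomial.X i)).IsHomogeneous d)
    (S : Finset (MvPolynomial (Fin (n + 1)) ℂ))
    (hirr : ∀ f ∈ S, Irreducible f)
    (hhom : ∀ f ∈ S, f.IsHomogeneous k)
    (hinv : ∀ f ∈ S, f ∣ δ f)
    (hassoc : ∀ f ∈ S, ∀ g ∈ S, f ≠ g → ¬ Associated f g)
    (hcard : (n + k).choose k < S.card)
    (hbig : (d - 1) * ((n + k).choose k).choose 2 < k * (S.card - (n + k).choose k)) :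
    ∃ u v : MvPolynomial (Fin (n + 1)) ℂ,
      LinearIndependent ℂ ![u, v] ∧ v * δ u = u * δ v := by
  classical
  set N := (n + k).choose k with hN
  have hcardι : Fintype.card (Sym (Fin (n + 1)) k) = N := card_sym_monomials n k
  set eqv : Sym (Fin (n + 1)) k ≃ Fin N := Fintype.equivFinOfCardEq hcardι with heqv
  set ord : Sym (Fin (n + 1)) k → ℕ := fun i => (eqv i : ℕ) with hord
  set m : Sym (Fin (n + 1)) k → MvPolynomial (Fin (n + 1)) ℂ :=
    fun j => monomial (expFin n k j) 1 with hm
  set W : Matrix (Sym (Fin (n + 1)) k) (Sym (Fin (n + 1)) k) (MvPolynomial (Fin (n + 1)) ℂ) :=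
    Matrix.of fun j i => (⇑δ)^[ord i] (m j) with hW
  -- Step 1: the Wronskian determinant vanishes.
  have hdet0 : W.det = 0 := by
    by_contra hE
    -- each f ∈ S divides W.det
    have hdvdall : ∀ f ∈ S, f ∣ W.det := by
      intro f hf
      have hf0 : f ≠ 0 := (hirr f hf).ne_zero
      obtain ⟨τ, hτ⟩ := MvPolynomial.ne_zero_iff.1 hf0
      have hdeg : τ.degree = k := by
        by_contra hne
        exact hτ ((hhom f hf).coeff_eq_zero hne)
      obtain ⟨j₀, hj₀⟩ := expFin_surjective n k hdeg
      exact dvd_wronskian_det δ m ord (fun j => coeff (expFin n k j) f) f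
        (repr_homog n k f (hhom f hf)) (hinv f hf) j₀
        (by show coeff (expFin n k j₀) f ≠ 0; rw [hj₀]; exact hτ)
    have hprod : (∏ f ∈ S, f) ∣ W.det := prod_finset_dvd S W.det hirr hassoc hdvdall
    have hprodne : (∏ f ∈ S, f) ≠ 0 :=
      Finset.prod_ne_zero_iff.2 fun f hf => (hirr f hf).ne_zero
    have hprodH : (∏ f ∈ S, f).IsHomogeneous (∑ _f ∈ S, k) := by
      have := MvPolynomial.IsHomogeneous.prod S id (fun _ => k)
        (fun f hf => hhom f hf)
      simpa using this
    have hentry : ∀ j i, ((W j i).IsHomogeneous (k + ord i * (d - 1))) := by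
      intro j i
      have hmj : (m j).IsHomogeneous k := isHomogeneous_monomial 1 (expFin_degree n k j)
      exact iterate_isHomogeneous δ d (by omega) hδ hmj (ord i)
    have hdetH : W.det.IsHomogeneous (∑ i, (k + ord i * (d - 1))) :=
      det_isHomogeneous W _ (fun i j => hentry i j)
    have hle := degree_le_of_dvd_homog hprodH hdetH hE hprod
    -- compute the two degrees
    have hsum1 : (∑ _f ∈ S, k) = S.card * k := by
      rw [Finset.sum_const, smul_eq_mul]
    have hsum2 : (∑ i, (k + ord i * (d - 1))) = N * k + N.choose 2 * (d - 1) := by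
      rw [Finset.sum_add_distrib, Finset.sum_const, smul_eq_mul, ← Finset.sum_mul]
      have h3 : (∑ i, ord i) = ∑ j : Fin N, (j : ℕ) := Equiv.sum_comp eqv (fun j => (j : ℕ))
      rw [h3, Fin.sum_univ_eq_sum_range (fun j => j) N, sum_range_id_choose,
        Finset.card_univ, hcardι]
    rw [hsum1, hsum2] at hle
    -- contradiction with hbig
    have e1 : (S.card - N) * k + N * k = S.card * k := by
      rw [← Nat.add_mul, Nat.sub_add_cancel hcard.le]
    have h2 : k * (S.card - N) ≤ (d - 1) * N.choose 2 := by
      rw [mul_comm k, mul_comm (d - 1)]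
      linarith [e1, hle]
    exact absurd hbig (not_lt.2 h2)
  -- Step 2: produce a rational first integral from the vanishing determinant.
  have hliv : LinearIndependent ℂ (fun j : Fin N => m (eqv.symm j)) := by
    have hinj2 : Function.Injective (fun j : Fin N => expFin n k (eqv.symm j)) :=
      (expFin_injective n k).comp eqv.symm.injective
    have hb := (MvPolynomial.basisMonomials (Fin (n + 1)) ℂ).linearIndependent
    have hcomp := hb.comp (fun j : Fin N => expFin n k (eqv.symm j)) hinj2
    rw [MvPolynomial.coe_basisMonomials] at hcomp
    exact hcomp
  have hdetM : (Matrix.of fun i j : Fin N => (⇑δ)^[(i : ℕ)] (m (eqv.symm j))).det = 0 := by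
    have hsub : (Matrix.of fun i j : Fin N => (⇑δ)^[(i : ℕ)] (m (eqv.symm j)))
        = (W.submatrix eqv.symm eqv.symm).transpose := by
      funext i j
      show (⇑δ)^[(i : ℕ)] (m (eqv.symm j)) = (⇑δ)^[ord (eqv.symm i)] (m (eqv.symm j))
      rw [hord]
      simp only [Equiv.apply_symm_apply]
    rw [hsub, Matrix.det_transpose, Matrix.det_submatrix_equiv_self, hdet0]
  exact first_integral_of_wronskian_zero δ (fun j : Fin N => m (eqv.symm j)) hliv hdetM
end
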